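/- arXiv:2310.07681 — 6 statements merged into one kernel-verified Lean document; each statement's English description precedes it below -/
import Mathlib

section
/- Let η(m) := ∏_{p prime, p∣m} p/(p+1) and A := ∏_{p prime} (1 + p/((p+1)²(p−1))). For every ε > 0 there exists a constant C > 0 such that for every prime P > 2 and every real K ≥ 2: |Σ_{m ≤ K, m odd, gcd(m,P)=1} η(m)/m² − 9A/11| ≤ C(1/P² + K^{ε−1}) and |Σ_{m ≤ K, gcd(m,P)=1} η(2m)/m² − 8A/11| ≤ C(1/P² + K^{ε−1}). -/
/-!
The function `m ↦ η(m)/m²` is multiplicative with Euler factor `F(p) = 1 + p/((p+1)²(p-1))`,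
so `A = ∑ η(m)/m²`. Keeping only the terms coprime to a prime `p` divides the sum of a
multiplicative function by its Euler factor at `p`; as `F(2) = 11/9`, the sum over odd `m`
coprime to `P` is `9A/(11 F(P))`, and `1 ≤ F(P) ≤ 1 + 2/P²`. For the second sum,
`η(2m)/m² = 4 η(2m)/(2m)²`, and among the `n` coprime to `P` the even ones contribute
`F(2) - 1 = 2/9` times the sum over the odd ones, which gives `8A/(11 F(P))`.
Truncating at `K` costs at most `∑_{m > K} 1/m² ≤ 2/K`.
-/

/-- `η(m) = ∏_{p prime, p ∣ m} p / (p + 1)`. -/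
noncomputable def eta (m : ℕ) : ℝ := ∏ p ∈ m.primeFactors, (p : ℝ) / ((p : ℝ) + 1)

/-- `A = ∏_{p prime} (1 + p / ((p+1)² (p-1)))`. -/
noncomputable def Aconst : ℝ :=
  ∏' p : Nat.Primes, (1 + ((p : ℕ) : ℝ) / ((((p : ℕ) : ℝ) + 1) ^ 2 * (((p : ℕ) : ℝ) - 1)))

namespace ArithmeticFunction

variable {R : Type*}

noncomputable def coprimePart [Zero R] (d : ℕ) (f : ArithmeticFunction R) : ArithmeticFunction R :=
  ⟨{n | n.Coprime d}.indicator f, by simp [Set.indicator_apply]⟩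

section Zero

variable [Zero R] {d : ℕ} {f : ArithmeticFunction R}

theorem coprimePart_apply (n : ℕ) [Decidable (n.Coprime d)] :
    f.coprimePart d n = if n.Coprime d then f n else 0 := by
  simp [coprimePart, Set.indicator_apply]

theorem coprimePart_comm (d d' : ℕ) :
    (f.coprimePart d).coprimePart d' = (f.coprimePart d').coprimePart d := by
  ext n
  simp only [coprimePart_apply]
  split_ifs <;> rfl

theorem coprimePart_prime_pow_of_ne {p q : ℕ} (hp : p.Prime) (hq : q.Prime) (hqp : q ≠ p)
    (e : ℕ) : f.coprimePart p (q ^ e) = f (q ^ e) := by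
  rw [coprimePart_apply, if_pos (((Nat.coprime_primes hq hp).2 hqp).pow_left e)]

end Zero

theorem norm_coprimePart_le [SeminormedAddGroup R] (d : ℕ) (f : ArithmeticFunction R) (n : ℕ) :
    ‖f.coprimePart d n‖ ≤ ‖f n‖ :=
  norm_indicator_le_norm_self f n

theorem IsMultiplicative.coprimePart [MonoidWithZero R] {f : ArithmeticFunction R}
    (hf : f.IsMultiplicative) (d : ℕ) : (f.coprimePart d).IsMultiplicative := by
  refine ⟨by simp [coprimePart_apply, hf.map_one], fun {m n} hmn => ?_⟩
  simp only [coprimePart_apply, Nat.coprime_mul_iff_left, hf.map_mul_of_coprime hmn]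
  split_ifs <;> simp_all

theorem tsum_coprimePart_prime_pow_self [AddCommMonoidWithOne R] [TopologicalSpace R]
    {f : ArithmeticFunction R} (hf₁ : f 1 = 1) {p : ℕ} (hp : p.Prime) :
    ∑' e, f.coprimePart p (p ^ e) = 1 := by
  rw [tsum_eq_single 0 fun e he => ?_]
  · simp [coprimePart_apply, hf₁]
  · rw [coprimePart_apply, if_neg]
    rw [Nat.coprime_pow_left_iff (Nat.pos_of_ne_zero he), Nat.coprime_self]
    exact hp.ne_one

theorem IsMultiplicative.tsum_prime_pow_mul_tsum_coprimePart [NormedCommRing R] [CompleteSpace R]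
    {f : ArithmeticFunction R} (hf : f.IsMultiplicative) (hsum : Summable (‖f ·‖))
    {p : ℕ} (hp : p.Prime) :
    (∑' e, f (p ^ e)) * ∑' n, f.coprimePart p n = ∑' n, f n := by
  classical
  let p' : Nat.Primes := ⟨p, hp⟩
  have hprod := hf.eulerProduct_hasProd hsum
  have hprod' := (hf.coprimePart p).eulerProduct_hasProd
    (hsum.of_nonneg_of_le (fun _ => norm_nonneg _) (norm_coprimePart_le p f))
  have hfactors : (fun q : Nat.Primes => ∑' e, f.coprimePart p (q ^ e))
      = Function.update (fun q : Nat.Primes => ∑' e, f (q ^ e)) p' 1 := by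
    funext q
    rcases eq_or_ne q p' with rfl | hq
    · simpa using tsum_coprimePart_prime_pow_self hf.map_one hp
    · rw [Function.update_of_ne hq]
      exact tsum_congr (coprimePart_prime_pow_of_ne hp q.2 (fun h => hq (Subtype.ext h)))
  rw [hfactors] at hprod'
  simpa [mul_comm] using (hprod.update' p' 1 hprod').symm

theorem tsum_prime_mul_add_tsum_coprimePart [NormedAddCommGroup R] [CompleteSpace R]
    {f : ArithmeticFunction R} (hsum : Summable f) {p : ℕ} (hp : p.Prime) :
    ∑' n, f (p * n) + ∑' n, f.coprimePart p n = ∑' n, f n := by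
  have hcompl : {n | n.Coprime p} = {n | p ∣ n}ᶜ := by
    ext n
    simp [Nat.coprime_comm, hp.coprime_iff_not_dvd]
  have hmultiples : ∑' n, f (p * n) = ∑' n, {n | p ∣ n}.indicator f n := by
    refine Eq.trans ?_ ((mul_right_injective₀ hp.ne_zero).tsum_eq fun n hn => ?_)
    · exact tsum_congr fun n =>
        (Set.indicator_of_mem (s := {n | p ∣ n}) (dvd_mul_right p n) f).symm
    · obtain ⟨k, rfl⟩ := Set.mem_of_indicator_ne_zero hn
      exact ⟨k, rfl⟩
  rw [hmultiples, coprimePart, coe_mk, hcompl, ← Summable.tsum_add (hsum.indicator _)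
    (hsum.indicator _)]
  exact tsum_congr fun n => congrFun (Set.indicator_self_add_compl _ f) n

end ArithmeticFunction

open ArithmeticFunction

theorem eta_nonneg (m : ℕ) : 0 ≤ eta m :=
  Finset.prod_nonneg fun _ _ => by positivity

theorem eta_le_one (m : ℕ) : eta m ≤ 1 :=
  Finset.prod_le_one (fun _ _ => by positivity) fun p _ =>
    (div_le_one (by positivity)).2 (le_add_of_nonneg_right zero_le_one)

theorem eta_mul {m n : ℕ} (hm : m ≠ 0) (hn : n ≠ 0) (h : m.Coprime n) :
    eta (m * n) = eta m * eta n := by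
  rw [eta, Nat.primeFactors_mul hm hn, Finset.prod_union h.disjoint_primeFactors, eta, eta]

theorem eta_prime_pow {p : ℕ} (hp : p.Prime) {e : ℕ} (he : e ≠ 0) :
    eta (p ^ e) = p / (p + 1) := by
  rw [eta, Nat.primeFactors_prime_pow he hp, Finset.prod_singleton]

theorem abs_eta_div_sq_le (k m : ℕ) : |eta k / (m : ℝ) ^ 2| ≤ ((m : ℝ) ^ 2)⁻¹ := by
  rw [abs_of_nonneg (by have := eta_nonneg k; positivity), div_eq_mul_inv]
  exact mul_le_of_le_one_left (by positivity) (eta_le_one k)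

noncomputable def etaOverSq : ArithmeticFunction ℝ := ⟨fun m => eta m / (m : ℝ) ^ 2, by simp⟩

theorem etaOverSq_apply (m : ℕ) : etaOverSq m = eta m / (m : ℝ) ^ 2 := rfl

theorem isMultiplicative_etaOverSq : etaOverSq.IsMultiplicative := by
  refine ⟨by simp [etaOverSq_apply, eta], fun {m n} h => ?_⟩
  rcases eq_or_ne m 0 with rfl | hm
  · simp [etaOverSq_apply]
  rcases eq_or_ne n 0 with rfl | hn
  · simp [etaOverSq_apply]
  rw [etaOverSq_apply, etaOverSq_apply, etaOverSq_apply, eta_mul hm hn h, Nat.cast_mul, mul_pow,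
    mul_div_mul_comm]

theorem summable_norm_etaOverSq : Summable (‖etaOverSq ·‖) :=
  (Real.summable_nat_pow_inv.2 one_lt_two).of_nonneg_of_le (fun _ => norm_nonneg _)
    fun m => abs_eta_div_sq_le m m

noncomputable def eulerFactor (p : ℕ) : ℝ := 1 + p / ((p + 1) ^ 2 * (p - 1))

theorem tsum_etaOverSq_prime_pow {p : ℕ} (hp : p.Prime) :
    ∑' e, etaOverSq (p ^ e) = eulerFactor p := by
  have hp1 : (1 : ℝ) < p := by exact_mod_cast hp.one_lt
  set r : ℝ := ((p : ℝ) ^ 2)⁻¹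
  have hr1 : r < 1 := inv_lt_one_of_one_lt₀ (one_lt_pow₀ hp1 two_ne_zero)
  have hterm : ∀ e, etaOverSq (p ^ (e + 1)) = p / (p + 1) * r * r ^ e := by
    intro e
    rw [etaOverSq_apply, eta_prime_pow hp e.succ_ne_zero, mul_assoc, ← pow_succ', Nat.cast_pow,
      ← pow_mul, inv_pow, ← pow_mul, mul_comm 2, div_eq_mul_inv]
  have hsum : Summable fun e => etaOverSq (p ^ e) :=
    (summable_norm_etaOverSq.comp_injective (Nat.pow_right_injective hp.two_le)).of_norm
  rw [hsum.tsum_eq_zero_add, tsum_congr hterm, tsum_mul_left,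
    tsum_geometric_of_lt_one (by positivity) hr1]
  simp only [pow_zero, isMultiplicative_etaOverSq.map_one, eulerFactor, r]
  have : (p : ℝ) - 1 ≠ 0 := by linarith
  have : (p : ℝ) ^ 2 - 1 ≠ 0 := by nlinarith
  field_simp
  ring

theorem eulerFactor_two : eulerFactor 2 = 11 / 9 := by norm_num [eulerFactor]

theorem one_le_eulerFactor {p : ℕ} (hp : 2 ≤ p) : 1 ≤ eulerFactor p := by
  have : (2 : ℝ) ≤ p := by exact_mod_cast hp
  unfold eulerFactor
  have : 0 ≤ (p : ℝ) / ((p + 1) ^ 2 * (p - 1)) := div_nonneg (by linarith) (by nlinarith)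
  linarith

theorem eulerFactor_sub_one_le {p : ℕ} (hp : 2 ≤ p) : eulerFactor p - 1 ≤ 2 / (p : ℝ) ^ 2 := by
  have : (2 : ℝ) ≤ p := by exact_mod_cast hp
  rw [eulerFactor, add_sub_cancel_left, div_le_div_iff₀ (by nlinarith) (by positivity)]
  nlinarith

theorem Aconst_eq_tsum : Aconst = ∑' n, etaOverSq n := by
  rw [← (isMultiplicative_etaOverSq.eulerProduct_hasProd summable_norm_etaOverSq).tprod_eq]
  exact tprod_congr fun p => (tsum_etaOverSq_prime_pow p.2).symm

theorem eulerFactor_mul_tsum_coprimePart_two {P : ℕ} (hP : P.Prime) (hP2 : P ≠ 2) :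
    eulerFactor P * ∑' n, (etaOverSq.coprimePart 2).coprimePart P n = 9 * Aconst / 11 := by
  have hodd := (isMultiplicative_etaOverSq.coprimePart 2).tsum_prime_pow_mul_tsum_coprimePart
    (summable_norm_etaOverSq.of_nonneg_of_le (fun _ => norm_nonneg _)
      (norm_coprimePart_le 2 _)) hP
  have htwo := isMultiplicative_etaOverSq.tsum_prime_pow_mul_tsum_coprimePart
    summable_norm_etaOverSq Nat.prime_two
  rw [tsum_congr (coprimePart_prime_pow_of_ne Nat.prime_two hP hP2),
    tsum_etaOverSq_prime_pow hP] at hodd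
  rw [tsum_etaOverSq_prime_pow Nat.prime_two, eulerFactor_two, ← Aconst_eq_tsum] at htwo
  rw [hodd]
  linarith

theorem tsum_coprimePart_two_mul {P : ℕ} (hP : P.Prime) (hP2 : P ≠ 2) :
    ∑' n, etaOverSq.coprimePart P (2 * n)
      = 2 / 9 * ∑' n, (etaOverSq.coprimePart 2).coprimePart P n := by
  have hsum : Summable (‖etaOverSq.coprimePart P ·‖) :=
    summable_norm_etaOverSq.of_nonneg_of_le (fun _ => norm_nonneg _) (norm_coprimePart_le P _)
  have hsplit := tsum_prime_mul_add_tsum_coprimePart hsum.of_norm Nat.prime_two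
  have htwo := (isMultiplicative_etaOverSq.coprimePart P).tsum_prime_pow_mul_tsum_coprimePart
    hsum Nat.prime_two
  rw [tsum_congr (coprimePart_prime_pow_of_ne hP Nat.prime_two hP2.symm),
    tsum_etaOverSq_prime_pow Nat.prime_two, eulerFactor_two] at htwo
  rw [coprimePart_comm] at hsplit htwo
  linarith

theorem etaOverSq_coprimePart_two_coprimePart_apply (P m : ℕ) :
    (etaOverSq.coprimePart 2).coprimePart P m
      = if Odd m ∧ Nat.gcd m P = 1 then eta m / (m : ℝ) ^ 2 else 0 := by
  simp only [coprimePart_apply, Nat.coprime_two_right, etaOverSq_apply]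
  split_ifs <;> simp_all [Nat.Coprime]

theorem four_mul_etaOverSq_coprimePart_two_mul {P : ℕ} (hP : Nat.Coprime 2 P) (m : ℕ) :
    4 * etaOverSq.coprimePart P (2 * m)
      = if Nat.gcd m P = 1 then eta (2 * m) / (m : ℝ) ^ 2 else 0 := by
  have hcop : (2 * m).Coprime P ↔ m.Coprime P := ⟨Nat.Coprime.coprime_mul_left, hP.mul_left⟩
  by_cases hm : m.Coprime P
  · rw [coprimePart_apply, if_pos (hcop.2 hm), if_pos hm, etaOverSq_apply, Nat.cast_mul]
    ring
  · rw [coprimePart_apply, if_neg (hcop.not.2 hm), if_neg hm, mul_zero]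

theorem eulerFactor_mul_tsum_odd_coprime {P : ℕ} (hP : P.Prime) (hP2 : P ≠ 2) :
    eulerFactor P * ∑' m, (if Odd m ∧ Nat.gcd m P = 1 then eta m / (m : ℝ) ^ 2 else 0)
      = 9 * Aconst / 11 := by
  simp_rw [← etaOverSq_coprimePart_two_coprimePart_apply]
  exact eulerFactor_mul_tsum_coprimePart_two hP hP2

theorem eulerFactor_mul_tsum_two_mul_coprime {P : ℕ} (hP : P.Prime) (hP2 : P ≠ 2) :
    eulerFactor P * ∑' m, (if Nat.gcd m P = 1 then eta (2 * m) / (m : ℝ) ^ 2 else 0)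
      = 8 * Aconst / 11 := by
  have h2P : Nat.Coprime 2 P := (Nat.coprime_primes Nat.prime_two hP).2 hP2.symm
  simp_rw [← four_mul_etaOverSq_coprimePart_two_mul h2P]
  rw [tsum_mul_left, tsum_coprimePart_two_mul hP hP2]
  linear_combination (8 / 9 : ℝ) * eulerFactor_mul_tsum_coprimePart_two hP hP2

theorem abs_ite_eta_div_sq_le (c : Prop) [Decidable c] (k m : ℕ) :
    |if c then eta k / (m : ℝ) ^ 2 else 0| ≤ ((m : ℝ) ^ 2)⁻¹ := by
  split_ifs
  · exact abs_eta_div_sq_le k m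
  · simp

theorem abs_sum_Icc_sub_tsum_le {f : ℕ → ℝ} (hf : ∀ n, |f n| ≤ ((n : ℝ) ^ 2)⁻¹) (N : ℕ) :
    |∑ n ∈ Finset.Icc 1 N, f n - ∑' n, f n| ≤ 2 / (N + 1) := by
  have hsum_sq : Summable fun n : ℕ => ((n : ℝ) ^ 2)⁻¹ := Real.summable_nat_pow_inv.2 one_lt_two
  have hsum : Summable f := hsum_sq.of_norm_bounded hf
  -- at `n = 0` the bound reads `|f 0| ≤ 0`, since `(0 : ℝ)⁻¹ = 0`
  have hf₀ : f 0 = 0 := by simpa using hf 0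
  have hhead : ∑ n ∈ Finset.Icc 1 N, f n = ∑ n ∈ Finset.range (N + 1), f n := by
    rw [Finset.range_eq_Ico, Finset.sum_eq_sum_Ico_succ_bot (Nat.succ_pos N), hf₀, zero_add]
    rfl
  have htail_sq : ∑' k, (((k + (N + 1) : ℕ) : ℝ) ^ 2)⁻¹ ≤ 2 / (N + 1) := by
    refine ((summable_nat_add_iff (N + 1)).2 hsum_sq).tsum_le_of_sum_range_le fun n => ?_
    calc ∑ k ∈ Finset.range n, (((k + (N + 1) : ℕ) : ℝ) ^ 2)⁻¹
        = ∑ k ∈ Finset.Ioo N (N + 1 + n), ((k : ℝ) ^ 2)⁻¹ := by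
          rw [← Finset.Ico_add_one_left_eq_Ioo, Finset.sum_Ico_eq_sum_range,
            Nat.add_sub_cancel_left]
          simp only [add_comm]
      _ ≤ 2 / (N + 1) := sum_Ioo_inv_sq_le N _
  rw [hhead, ← hsum.sum_add_tsum_nat_add (N + 1), sub_add_cancel_left, abs_neg]
  calc |∑' k, f (k + (N + 1))|
      ≤ ∑' k, (((k + (N + 1) : ℕ) : ℝ) ^ 2)⁻¹ :=
        tsum_of_norm_bounded (f := fun k => f (k + (N + 1)))
          ((summable_nat_add_iff (N + 1)).2 hsum_sq).hasSum fun k => hf _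
    _ ≤ 2 / (N + 1) := htail_sq

theorem abs_sum_Icc_sub_le {f : ℕ → ℝ} (hf : ∀ n, |f n| ≤ ((n : ℝ) ^ 2)⁻¹) {a F : ℝ}
    (ha : 0 ≤ a) (hF : 1 ≤ F) (hfa : F * ∑' n, f n = a) (N : ℕ) :
    |∑ n ∈ Finset.Icc 1 N, f n - a| ≤ 2 / (N + 1) + a * (F - 1) := by
  set S := ∑' n, f n
  have hS : 0 ≤ S := nonneg_of_mul_nonneg_right (hfa ▸ ha) (by linarith)
  have hlimit : |S - a| ≤ a * (F - 1) := by
    rw [abs_of_nonpos (by nlinarith), ← hfa]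
    nlinarith [mul_nonneg (sq_nonneg (F - 1)) hS]
  calc |∑ n ∈ Finset.Icc 1 N, f n - a|
      ≤ |∑ n ∈ Finset.Icc 1 N, f n - S| + |S - a| := abs_sub_le _ _ _
    _ ≤ 2 / (N + 1) + a * (F - 1) := add_le_add (abs_sum_Icc_sub_tsum_le hf N) hlimit

theorem two_div_floor_add_one_le_rpow {K : ℝ} (hK : 1 ≤ K) {ε : ℝ} (hε : 0 < ε) :
    2 / ((⌊K⌋₊ : ℝ) + 1) ≤ 2 * K ^ (ε - 1) := by
  calc 2 / ((⌊K⌋₊ : ℝ) + 1) ≤ 2 / K :=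
        div_le_div_of_nonneg_left zero_le_two (by linarith) (Nat.lt_floor_add_one K).le
    _ = 2 * K ^ (-1 : ℝ) := by rw [Real.rpow_neg_one, div_eq_mul_inv]
    _ ≤ 2 * K ^ (ε - 1) :=
        mul_le_mul_of_nonneg_left (Real.rpow_le_rpow_of_exponent_le hK (by linarith)) zero_le_two

theorem stmt0 : ∀ ε : ℝ, 0 < ε → ∃ C : ℝ, 0 < C ∧
    ∀ P : ℕ, P.Prime → 2 < P → ∀ K : ℝ, 2 ≤ K →
      |(∑ m ∈ Finset.Icc 1 ⌊K⌋₊,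
            if Odd m ∧ Nat.gcd m P = 1 then eta m / (m : ℝ) ^ 2 else 0)
          - 9 * Aconst / 11| ≤ C * (1 / (P : ℝ) ^ 2 + K ^ (ε - 1)) ∧
      |(∑ m ∈ Finset.Icc 1 ⌊K⌋₊,
            if Nat.gcd m P = 1 then eta (2 * m) / (m : ℝ) ^ 2 else 0)
          - 8 * Aconst / 11| ≤ C * (1 / (P : ℝ) ^ 2 + K ^ (ε - 1)) := by
  intro ε hε
  have hA : 0 ≤ Aconst := Aconst_eq_tsum ▸ tsum_nonneg fun n =>
    div_nonneg (eta_nonneg n) (sq_nonneg (n : ℝ))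
  refine ⟨2 * Aconst + 2, by linarith, fun P hP hP2 K hK => ?_⟩
  have hbound : ∀ a, 0 ≤ a → a ≤ Aconst → 2 / ((⌊K⌋₊ : ℝ) + 1) + a * (eulerFactor P - 1)
      ≤ (2 * Aconst + 2) * (1 / (P : ℝ) ^ 2 + K ^ (ε - 1)) := by
    intro a ha haA
    have htail := two_div_floor_add_one_le_rpow (K := K) (by linarith) hε
    have hfactor : a * (eulerFactor P - 1) ≤ Aconst * (2 / (P : ℝ) ^ 2) :=
      mul_le_mul haA (eulerFactor_sub_one_le hP2.le)
        (sub_nonneg.2 (one_le_eulerFactor hP2.le)) hA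
    have hK_nonneg : 0 ≤ Aconst * K ^ (ε - 1) := by positivity
    have hP_nonneg : 0 ≤ 1 / (P : ℝ) ^ 2 := by positivity
    linarith [show Aconst * (2 / (P : ℝ) ^ 2) = 2 * Aconst * (1 / (P : ℝ) ^ 2) by ring]
  exact ⟨(abs_sum_Icc_sub_le (fun m => abs_ite_eta_div_sq_le _ m m) (by positivity)
      (one_le_eulerFactor hP2.le) (eulerFactor_mul_tsum_odd_coprime hP hP2.ne') _).trans
      (hbound _ (by positivity) (by linarith)),
    (abs_sum_Icc_sub_le (fun m => abs_ite_eta_div_sq_le _ (2 * m) m) (by positivity)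
      (one_le_eulerFactor hP2.le) (eulerFactor_mul_tsum_two_mul_coprime hP hP2.ne') _).trans
      (hbound _ (by positivity) (by linarith))⟩
end

section
/- Let P and p be distinct odd primes, r a positive integer with p ∤ r, and α ≥ 1 an integer. Then Σ_{a=0}^{p^α − 1} (a | p^α)·(a·r² − 4P | p^α) = −p^{α−1} if α is odd, and = p^{α−1}(p − 2) if α is even, where (· | p^α) is the Jacobi symbol. -/
/-!
Since `(a | p^α) = (a | p)^α`, each summand is `χ^α (a) · χ^α (r² a − 4P)` for the quadratic
character `χ` of `𝔽_p`, so the sum is `p^(α-1)` times the corresponding sum over `𝔽_p`.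
An affine substitution turns `∑ₓ ψ(x) ψ(b x + c)` into `ψ(-c/b) ψ(c)` times the Jacobi sum
`J(ψ, ψ)`. For odd `α`, `ψ = χ` and `J(χ, χ) = -χ(-1)`, giving `-χ(r²) = -1`; for even `α`,
`ψ` is trivial and `J(1, 1) = p - 2`.
-/

open Finset

theorem sum_range_natCast_zmod {M : Type*} [AddCommMonoid M] (p : ℕ) [NeZero p]
    (f : ZMod p → M) :
    ∑ a ∈ range p, f a = ∑ x : ZMod p, f x :=
  sum_nbij' (↑) ZMod.val (fun _ _ ↦ mem_univ _) (fun x _ ↦ mem_range.mpr x.val_lt)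
    (fun _ ha ↦ ZMod.val_cast_of_lt (mem_range.mp ha)) (fun x _ ↦ ZMod.natCast_zmod_val x)
    (fun _ _ ↦ rfl)

theorem sum_range_mul_natCast_zmod {M : Type*} [AddCommMonoid M] (n p : ℕ) [NeZero p]
    (f : ZMod p → M) : ∑ a ∈ range (n * p), f a = n • ∑ x : ZMod p, f x := by
  induction n with
  | zero => simp
  | succ n ih =>
    rw [add_mul, one_mul, sum_range_add, ih, succ_nsmul, ← sum_range_natCast_zmod]
    simp

theorem sum_mulChar_mul_affine {F R : Type*} [Field F] [Fintype F] [CommRing R]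
    (χ ψ : MulChar F R) {b c : F} (hb : b ≠ 0) (hc : c ≠ 0) :
    ∑ x, χ x * ψ (b * x + c) = χ (-c / b) * ψ c * jacobiSum χ ψ := by
  rw [jacobiSum, mul_sum]
  refine (Fintype.sum_bijective (-c / b * ·) (mulLeft_bijective₀ _ (by simp [hb, hc])) _ _
    fun y ↦ ?_).symm
  have : b * (-c / b * y) + c = c * (1 - y) := by field_simp; ring
  rw [this, map_mul, map_mul]
  ring

theorem jacobiSym_prime_pow (a : ℤ) {p α : ℕ} [Fact p.Prime] (hα : α ≠ 0) :
    jacobiSym a (p ^ α) = (quadraticChar (ZMod p) ^ α) a := by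
  rw [jacobiSym.pow_right, ← jacobiSym.legendreSym.to_jacobiSym, MulChar.pow_apply' _ hα]
  rfl

theorem sum_quadraticChar_mul_affine {F : Type*} [Field F] [Fintype F] [DecidableEq F]
    (hF : ringChar F ≠ 2) {b c : F} (hb : b ≠ 0) (hc : c ≠ 0) :
    ∑ x, quadraticChar F x * quadraticChar F (b * x + c) = -quadraticChar F b := by
  set χ := quadraticChar F
  have hJ : jacobiSum χ χ = -χ (-1) := by
    simpa only [(quadraticChar_isQuadratic F).inv] using
      jacobiSum_nontrivial_inv (quadraticChar_ne_one hF)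
  have hsq : -c / b * c * -1 = (c / b) ^ 2 * b := by field_simp
  rw [sum_mulChar_mul_affine χ χ hb hc, hJ, mul_neg, ← map_mul, ← map_mul, hsq, map_mul,
    quadraticChar_sq_one' (div_ne_zero hc hb), one_mul]

theorem sum_one_mulChar_mul_affine {F R : Type*} [Field F] [Fintype F] [CommRing R]
    {b c : F} (hb : b ≠ 0) (hc : c ≠ 0) :
    ∑ x, (1 : MulChar F R) x * (1 : MulChar F R) (b * x + c) = Fintype.card F - 2 := by
  rw [sum_mulChar_mul_affine 1 1 hb hc, jacobiSum_one_one, MulChar.one_apply (by simp [hb, hc]),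
    MulChar.one_apply hc.isUnit]
  ring

theorem stmt5_general (P p r α : ℕ) (hP : P.Prime) (hp : p.Prime) (hpodd : Odd p)
    (hne : P ≠ p) (hpr : ¬ p ∣ r) (hα : 1 ≤ α) :
    (∑ a ∈ Finset.range (p ^ α),
        jacobiSym (a : ℤ) (p ^ α) * jacobiSym ((a : ℤ) * (r : ℤ) ^ 2 - 4 * (P : ℤ)) (p ^ α)) =
      if Odd α then -((p : ℤ) ^ (α - 1)) else (p : ℤ) ^ (α - 1) * ((p : ℤ) - 2) := by
  have : Fact p.Prime := ⟨hp⟩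
  have hp2 : p ≠ 2 := by rintro rfl; exact absurd hpodd (by decide)
  have hr : (r : ZMod p) ≠ 0 := by rwa [Ne, ZMod.natCast_eq_zero_iff]
  have h4P : -((4 * P : ℕ) : ZMod p) ≠ 0 := by
    rw [Ne, neg_eq_zero, ZMod.natCast_eq_zero_iff, hp.dvd_mul, show 4 = 2 ^ 2 by rfl]
    rintro (h | h)
    · exact hp2 ((Nat.prime_dvd_prime_iff_eq hp Nat.prime_two).mp (hp.dvd_of_dvd_pow h))
    · exact hne ((Nat.prime_dvd_prime_iff_eq hp hP).mp h).symm
  set χ := quadraticChar (ZMod p) ^ α with hχ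
  have hsummand (a : ℕ) :
      jacobiSym (a : ℤ) (p ^ α) * jacobiSym ((a : ℤ) * (r : ℤ) ^ 2 - 4 * (P : ℤ)) (p ^ α) =
        χ a * χ ((r : ZMod p) ^ 2 * a + -((4 * P : ℕ) : ZMod p)) := by
    rw [hχ, jacobiSym_prime_pow _ (by omega), jacobiSym_prime_pow _ (by omega)]
    push_cast
    ring_nf
  rw [sum_congr rfl fun a _ ↦ hsummand a, ← pow_sub_one_mul (by omega),
    sum_range_mul_natCast_zmod _ _
      fun x ↦ χ x * χ ((r : ZMod p) ^ 2 * x + -((4 * P : ℕ) : ZMod p)),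
    nsmul_eq_mul, Nat.cast_pow]
  split_ifs with hodd
  · rw [hχ, (quadraticChar_isQuadratic _).pow_odd hodd,
      sum_quadraticChar_mul_affine (by rwa [ZMod.ringChar_zmod_n]) (pow_ne_zero 2 hr) h4P,
      quadraticChar_sq_one' hr, mul_neg, mul_one]
  · rw [hχ, (quadraticChar_isQuadratic _).pow_even (Nat.not_odd_iff_even.mp hodd),
      sum_one_mulChar_mul_affine (pow_ne_zero 2 hr) h4P, ZMod.card]

theorem stmt5 (P p r α : ℕ) (hP : P.Prime) (hp : p.Prime) (hPodd : Odd P) (hpodd : Odd p)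
    (hne : P ≠ p) (hr : 0 < r) (hpr : ¬ p ∣ r) (hα : 1 ≤ α) :
    (∑ a ∈ Finset.range (p ^ α),
        jacobiSym (a : ℤ) (p ^ α) * jacobiSym ((a : ℤ) * (r : ℤ) ^ 2 - 4 * (P : ℤ)) (p ^ α)) =
      if Odd α then -((p : ℤ) ^ (α - 1)) else (p : ℤ) ^ (α - 1) * ((p : ℤ) - 2) :=
  stmt5_general P p r α hP hp hpodd hne hpr hα
end

section
/- Let P be an odd prime, r an odd positive integer, and α ≥ 3 an integer. Then Σ_{a=0}^{2^α − 1} χ₈(a)^α · χ₈(a·r² − 4P)^α = (−1)^α · 2^{α−1}. -/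
lemma aux_sum_odd (n : ℕ) :
    (∑ a ∈ Finset.range (2 * n), (if a % 2 = 1 then (1 : ℤ) else 0)) = n := by
  induction n with
  | zero => simp
  | succ m ih =>
    have h : 2 * (m + 1) = (2 * m + 1) + 1 := by ring
    rw [h, Finset.sum_range_succ, Finset.sum_range_succ, ih]
    have h1 : (2 * m) % 2 = 0 := by omega
    have h2 : (2 * m + 1) % 2 = 1 := by omega
    simp [h1, h2]

theorem stmt7 (P r α : ℕ) (hP : P.Prime) (hPodd : Odd P) (hr : 0 < r) (hrodd : Odd r)
    (hα : 3 ≤ α) :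
    (∑ a ∈ Finset.range (2 ^ α),
        (ZMod.χ₈ (a : ZMod 8)) ^ α *
          (ZMod.χ₈ (((a : ℤ) * (r : ℤ) ^ 2 - 4 * (P : ℤ) : ℤ) : ZMod 8)) ^ α) =
      (-1) ^ α * 2 ^ (α - 1) := by
  obtain ⟨k, hk⟩ := hrodd
  obtain ⟨j, hj⟩ := hPodd
  -- (r : ZMod 8)^2 = 1
  have hsq1 : ∀ x : ZMod 8, x.val % 2 = 1 → x ^ 2 = 1 := by decide
  have hrv : ((r : ZMod 8)).val % 2 = 1 := by
    rw [ZMod.val_natCast]; omega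
  have hr2 : ((r : ZMod 8)) ^ 2 = 1 := hsq1 _ hrv
  -- 4 * (P : ZMod 8) = 4
  have h4P : ∀ x : ZMod 8, x.val % 2 = 1 → 4 * x = 4 := by decide
  have hPv : ((P : ZMod 8)).val % 2 = 1 := by
    rw [ZMod.val_natCast]; omega
  have hP4 : 4 * (P : ZMod 8) = 4 := h4P _ hPv
  -- pointwise key
  have hkey : ∀ x : ZMod 8, ZMod.χ₈ x * ZMod.χ₈ (x - 4) = -(ZMod.χ₈ x ^ 2) := by decide
  have hα0 : α ≠ 0 := by omega
  have hpow : ∀ x : ZMod 8, (ZMod.χ₈ x ^ 2) ^ α = ZMod.χ₈ x ^ 2 := by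
    intro x
    have h : ZMod.χ₈ x ^ 2 = 0 ∨ ZMod.χ₈ x ^ 2 = 1 := by revert x; decide
    rcases h with h | h <;> rw [h]
    · exact zero_pow hα0
    · exact one_pow α
  have hchi : ∀ a : ℕ, (ZMod.χ₈ (a : ZMod 8)) ^ 2 = if a % 2 = 1 then (1 : ℤ) else 0 := by
    intro a
    have hmod : ((a : ℕ) : ZMod 8) = ((a % 8 : ℕ) : ZMod 8) := (ZMod.natCast_mod a 8).symm
    have h2 : a % 8 % 2 = a % 2 := Nat.mod_mod_of_dvd a (by norm_num)
    rw [hmod, ← h2]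
    have h8 : a % 8 < 8 := Nat.mod_lt _ (by norm_num)
    set b := a % 8 with hb
    interval_cases b <;> decide
  have hterm : ∀ a : ℕ,
      (ZMod.χ₈ (a : ZMod 8)) ^ α *
          (ZMod.χ₈ (((a : ℤ) * (r : ℤ) ^ 2 - 4 * (P : ℤ) : ℤ) : ZMod 8)) ^ α =
        (-1) ^ α * (if a % 2 = 1 then (1 : ℤ) else 0) := by
    intro a
    have harg : (((a : ℤ) * (r : ℤ) ^ 2 - 4 * (P : ℤ) : ℤ) : ZMod 8)
        = (a : ZMod 8) - 4 := by
      push_cast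
      rw [hr2, hP4]; ring
    rw [harg, ← mul_pow, hkey, neg_pow, hpow, hchi]
  rw [Finset.sum_congr rfl (fun a _ => hterm a), ← Finset.mul_sum]
  congr 1
  have h2a : 2 ^ α = 2 * 2 ^ (α - 1) := by
    rw [← pow_succ']
    congr 1
    omega
  rw [h2a, aux_sum_odd]
  push_cast
  ring
end

section
/- Let d be an odd positive integer, g a positive integer all of whose prime factors divide d, r a positive integer with gcd(r,d) = 1, P a prime, and t an integer with gcd(t,d) = 1 and d² ∣ r²t − 4P. Then Σ_{a mod d²g, a ≡ t (mod d²)} (a | g)·((r²a − 4P)/d² | g) equals φ(g) if g is a perfect square, and equals 0 otherwise. (Here the sum runs over the g residues a modulo d²g congruent to t modulo d²; for each such a, d² divides r²a − 4P so the second argument is an integer.) -/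
/-!
Every prime factor of `g` divides `d`, so `J(t + v d² | g) = J(t | g)`, while the second symbol is
`J(c + r² v | g)` with `c = (r² t - 4P) / d²`. As `r` is a unit modulo `g`, `v ↦ c + r² v` permutes
the residues modulo `g`, so the sum is `J(t | g)` times the sum of the character `J(· | g)` over
`ZMod g`. That character is trivial exactly when `g` is a square, giving `φ(g)`; otherwise, for odd
`g`, it is nontrivial and its sum vanishes.
-/

open Finset

lemma Nat.Coprime.of_forall_prime_dvd {a d g : ℕ} (hgd : ∀ p : ℕ, p.Prime → p ∣ g → p ∣ d)
    (h : a.Coprime d) : a.Coprime g :=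
  Nat.coprime_of_dvd fun p hp hpa hpg =>
    hp.one_lt.ne' (Nat.dvd_one.mp (h ▸ Nat.dvd_gcd hpa (hgd p hp hpg)))

lemma jacobiSym_eq_of_forall_prime_dvd_sub {a₁ a₂ : ℤ} {b : ℕ}
    (h : ∀ p : ℕ, p.Prime → p ∣ b → (p : ℤ) ∣ a₁ - a₂) : jacobiSym a₁ b = jacobiSym a₂ b := by
  unfold jacobiSym
  congr 1
  refine List.pmap_congr_left _ fun p hp _ hpp => ?_
  have : Fact p.Prime := ⟨hpp⟩
  rw [legendreSym, legendreSym, (ZMod.intCast_eq_intCast_iff_dvd_sub _ _ _).mpr]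
  exact dvd_sub_comm.mp (h p hpp (Nat.dvd_of_mem_primeFactorsList hp))

lemma Nat.exists_prime_odd_factorization_of_not_isSquare {n : ℕ} (hn : n ≠ 0)
    (hsq : ¬IsSquare n) : ∃ p : ℕ, p.Prime ∧ p ∣ n ∧ Odd (n.factorization p) := by
  obtain ⟨a, b, rfl, ha⟩ := Nat.sq_mul_squarefree n
  have ha0 : a ≠ 0 := right_ne_zero_of_mul hn
  have hb0 : b ≠ 0 := pow_ne_zero_iff two_ne_zero |>.mp (left_ne_zero_of_mul hn)
  have ha1 : a ≠ 1 := by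
    rintro rfl
    exact hsq ⟨b, by ring⟩
  obtain ⟨p, hp, hpa⟩ := Nat.exists_prime_and_dvd ha1
  have hap : a.factorization p = 1 :=
    le_antisymm ((Nat.squarefree_iff_factorization_le_one ha0).mp ha p)
      (hp.factorization_pos_of_dvd ha0 hpa)
  refine ⟨p, hp, dvd_mul_of_dvd_right hpa _, ?_⟩
  rw [Nat.factorization_mul (pow_ne_zero 2 hb0) ha0, Nat.factorization_pow]
  simp [hap]

lemma exists_jacobiSym_eq_neg_one {n : ℕ} (hodd : Odd n) (hsq : ¬IsSquare n) :
    ∃ k : ℕ, k.Coprime n ∧ jacobiSym k n = -1 := by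
  have hn : n ≠ 0 := hodd.pos.ne'
  obtain ⟨p, hp, hpn, he⟩ := Nat.exists_prime_odd_factorization_of_not_isSquare hn hsq
  have : Fact p.Prime := ⟨hp⟩
  have hp2 : ringChar (ZMod p) ≠ 2 := by
    rw [ZMod.ringChar_zmod_n]
    rintro rfl
    exact (Nat.not_even_iff_odd.mpr hodd) (even_iff_two_dvd.mpr hpn)
  obtain ⟨x, hx⟩ := FiniteField.exists_nonsquare hp2
  set m := n / p ^ n.factorization p
  have hpm : p.Coprime m := Nat.coprime_ordCompl hp hn
  -- With `n = p ^ e * m`, `p ∤ m`, take `k ≡ x (mod p)` and `k ≡ 1 (mod m)`: then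
  -- `J(k | n) = J(k | p) ^ e * J(k | m) = (-1) ^ e`.
  obtain ⟨k, hkp, hkm⟩ := Nat.chineseRemainder hpm x.val 1
  have hkx : (k : ZMod p) = x := by
    rw [← ZMod.natCast_zmod_val x, ZMod.natCast_eq_natCast_iff]
    exact hkp
  have hJp : jacobiSym k p = -1 := by
    rw [← jacobiSym.legendreSym.to_jacobiSym, legendreSym.eq_neg_one_iff', hkx]
    exact hx
  have hJm : jacobiSym k m = 1 := by
    rw [jacobiSym.mod_left' (b := m) (a₂ := 1) (by exact_mod_cast hkm), jacobiSym.one_left]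
  have hkp' : k.Coprime p := by
    rw [Nat.coprime_comm, hp.coprime_iff_not_dvd, ← ZMod.natCast_eq_zero_iff, hkx]
    rintro rfl
    exact hx .zero
  have hkm' : k.Coprime m := by simpa [Nat.Coprime] using Nat.ModEq.gcd_eq hkm
  have hn_eq : p ^ n.factorization p * m = n := Nat.ordProj_mul_ordCompl_eq_self n p
  refine ⟨k, hn_eq ▸ (hkp'.pow_right _).mul_right hkm', ?_⟩
  rw [← hn_eq, jacobiSym.mul_right' _ (pow_ne_zero _ hp.ne_zero)
    (Nat.ordCompl_pos p hn).ne', jacobiSym.pow_right, hJp, hJm, mul_one, he.neg_one_pow]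

lemma jacobiSym_eq_one_of_isSquare {a : ℤ} {n : ℕ} [NeZero n] (hsq : IsSquare n)
    (ha : a.gcd n = 1) : jacobiSym a n = 1 := by
  obtain ⟨m, rfl⟩ := hsq
  have hm : m ≠ 0 := left_ne_zero_of_mul (NeZero.ne (m * m))
  rw [jacobiSym.mul_right' _ hm hm, ← sq,
    jacobiSym.sq_one (Nat.Coprime.coprime_mul_left_right ha)]

section jacobiChar

variable (n : ℕ) [NeZero n]

lemma jacobiSym_val_intCast (a : ℤ) : jacobiSym ((a : ZMod n).val) n = jacobiSym a n :=
  jacobiSym.mod_left' (by rw [ZMod.val_intCast, Int.emod_emod_of_dvd _ dvd_rfl])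

def jacobiChar : MulChar (ZMod n) ℤ where
  toFun x := jacobiSym x.val n
  map_one' := by
    simpa [jacobiSym.one_left] using jacobiSym_val_intCast n 1
  map_mul' x y := by
    rw [← ZMod.intCast_zmod_cast x, ← ZMod.intCast_zmod_cast y, ← Int.cast_mul,
      jacobiSym_val_intCast, jacobiSym_val_intCast, jacobiSym_val_intCast, jacobiSym.mul_left]
  map_nonunit' x hx := by
    rw [jacobiSym.eq_zero_iff_not_coprime, Int.gcd_natCast_natCast]
    rwa [← ZMod.natCast_zmod_val x, ZMod.isUnit_iff_coprime] at hx

variable {n}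

lemma jacobiChar_apply (x : ZMod n) : jacobiChar n x = jacobiSym x.val n := rfl

lemma jacobiChar_intCast (a : ℤ) : jacobiChar n a = jacobiSym a n :=
  jacobiSym_val_intCast n a

lemma jacobiChar_eq_one_of_isSquare (hsq : IsSquare n) : jacobiChar n = 1 := by
  refine MulChar.ext fun u => ?_
  have hu : (u : ZMod n).val.Coprime n := by
    rw [← ZMod.isUnit_iff_coprime, ZMod.natCast_zmod_val]
    exact u.isUnit
  rw [MulChar.one_apply_coe, jacobiChar_apply, jacobiSym_eq_one_of_isSquare hsq (Int.gcd_natCast_natCast _ _ ▸ hu)]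

lemma jacobiChar_ne_one_of_not_isSquare (hodd : Odd n) (hsq : ¬IsSquare n) :
    jacobiChar n ≠ 1 := by
  obtain ⟨k, hk, hJ⟩ := exists_jacobiSym_eq_neg_one hodd hsq
  refine MulChar.ne_one_iff.mpr ⟨ZMod.unitOfCoprime k hk, ?_⟩
  rw [ZMod.coe_unitOfCoprime, ← Int.cast_natCast, jacobiChar_intCast, hJ]
  decide

lemma sum_jacobiChar (hodd : Odd n) :
    ∑ x, jacobiChar n x = if IsSquare n then (n.totient : ℤ) else 0 := by
  split_ifs with hsq
  · rw [jacobiChar_eq_one_of_isSquare hsq, MulChar.sum_one_eq_card_units,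
      ZMod.card_units_eq_totient]
  · exact MulChar.sum_eq_zero_of_ne_one (jacobiChar_ne_one_of_not_isSquare hodd hsq)

end jacobiChar

lemma ZMod.sum_range_natCast {M : Type*} [AddCommMonoid M] (n : ℕ) [NeZero n] (f : ZMod n → M) :
    ∑ v ∈ range n, f v = ∑ x, f x :=
  sum_nbij' (↑) ZMod.val (fun _ _ => mem_univ _) (fun x _ => mem_range.mpr x.val_lt)
    (fun _ hv => ZMod.val_cast_of_lt (mem_range.mp hv)) (fun x _ => ZMod.natCast_zmod_val x)
    (fun _ _ => rfl)

lemma ZMod.sum_range_affine {M : Type*} [AddCommMonoid M] {n : ℕ} [NeZero n] (f : ZMod n → M)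
    (c : ZMod n) (u : (ZMod n)ˣ) : ∑ v ∈ range n, f (c + u * v) = ∑ x, f x := by
  rw [ZMod.sum_range_natCast n (fun x => f (c + u * x))]
  exact Fintype.sum_bijective _ ((Equiv.addLeft c).bijective.comp (Units.mulLeft_bijective u))
    _ _ fun _ => rfl

theorem stmt8_general (d g r P : ℕ) (t : ℤ) (hdodd : Odd d) (hg : 0 < g)
    (hgd : ∀ p : ℕ, p.Prime → p ∣ g → p ∣ d) (hrd : Nat.gcd r d = 1)
    (ht : Int.gcd t d = 1) :
    (∑ v ∈ Finset.range g,
        jacobiSym (t + (v : ℤ) * (d : ℤ) ^ 2) g *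
          jacobiSym (((r : ℤ) ^ 2 * (t + (v : ℤ) * (d : ℤ) ^ 2) - 4 * (P : ℤ)) / (d : ℤ) ^ 2) g) =
      if IsSquare g then (Nat.totient g : ℤ) else 0 := by
  have : NeZero g := ⟨hg.ne'⟩
  have hgodd : Odd g :=
    Nat.coprime_two_left.mp (.of_forall_prime_dvd hgd (Nat.coprime_two_left.mpr hdodd))
  have htg : Int.gcd t g = 1 := Nat.Coprime.of_forall_prime_dvd hgd ht
  have hr2g : (r ^ 2).Coprime g := (Nat.Coprime.of_forall_prime_dvd hgd hrd).pow_left 2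
  set c : ℤ := ((r : ℤ) ^ 2 * t - 4 * P) / (d : ℤ) ^ 2
  have hsummand (v : ℕ) :
      jacobiSym (t + (v : ℤ) * (d : ℤ) ^ 2) g *
          jacobiSym (((r : ℤ) ^ 2 * (t + (v : ℤ) * (d : ℤ) ^ 2) - 4 * (P : ℤ)) / (d : ℤ) ^ 2) g =
        jacobiSym t g * jacobiChar g (c + ZMod.unitOfCoprime _ hr2g * v) := by
    have hfirst : jacobiSym (t + (v : ℤ) * (d : ℤ) ^ 2) g = jacobiSym t g :=
      jacobiSym_eq_of_forall_prime_dvd_sub fun p hp hpg => by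
        simpa using (Int.natCast_dvd_natCast.mpr (hgd p hp hpg)).pow two_ne_zero |>.mul_left _
    have hsecond : ((r : ℤ) ^ 2 * (t + (v : ℤ) * (d : ℤ) ^ 2) - 4 * (P : ℤ)) / (d : ℤ) ^ 2 =
        c + (r : ℤ) ^ 2 * v := by
      rw [← Int.add_mul_ediv_right _ _ (pow_ne_zero 2 (Int.natCast_ne_zero.mpr hdodd.pos.ne'))]
      ring_nf
    rw [hfirst, hsecond, ← jacobiChar_intCast (c + _), ZMod.coe_unitOfCoprime]
    push_cast
    rfl
  rw [sum_congr rfl fun v _ => hsummand v, ← mul_sum, ZMod.sum_range_affine, sum_jacobiChar hgodd]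
  split_ifs with hsq
  · rw [jacobiSym_eq_one_of_isSquare hsq htg, one_mul]
  · rw [mul_zero]

theorem stmt8 (d g r P : ℕ) (t : ℤ) (hd : 0 < d) (hdodd : Odd d) (hg : 0 < g)
    (hgd : ∀ p : ℕ, p.Prime → p ∣ g → p ∣ d) (hr : 0 < r) (hrd : Nat.gcd r d = 1)
    (hP : P.Prime) (ht : Int.gcd t d = 1)
    (hdvd : (d : ℤ) ^ 2 ∣ (r : ℤ) ^ 2 * t - 4 * (P : ℤ)) :
    (∑ v ∈ Finset.range g,
        jacobiSym (t + (v : ℤ) * (d : ℤ) ^ 2) g *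
          jacobiSym (((r : ℤ) ^ 2 * (t + (v : ℤ) * (d : ℤ) ^ 2) - 4 * (P : ℤ)) / (d : ℤ) ^ 2) g) =
      if IsSquare g then (Nat.totient g : ℤ) else 0 :=
  stmt8_general d g r P t hdodd hg hgd hrd ht
end

section
/- Let d be an odd positive integer, r a positive integer with gcd(r,d) = 1, P an odd prime, and t an integer with gcd(t,d) = 1 and d² ∣ r²t − 4P. Let m be an odd positive integer with P ∤ m, let g be the largest divisor of m all of whose prime factors divide d, and let m' := m/g. Then Σ_{a mod d²m, a ≡ t (mod d²)} (a | m)·((r²a − 4P)/d² | m) = φ(g)·[g is a perfect square]·θ, where θ := Σ_{b mod m'} (b | m')·(r²b − 4P | m'). -/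
open NumberTheorySymbols Finset


lemma jac_congr (a b : ℤ) (g : ℕ) (h : ∀ p : ℕ, p.Prime → p ∣ g → (p:ℤ) ∣ a - b) :
    J(a | g) = J(b | g) := by
  unfold jacobiSym
  congr 1
  apply List.pmap_congr_left
  intro p hp h1 h2
  have pp : p.Prime := Nat.prime_of_mem_primeFactorsList hp
  have pdvd : p ∣ g := Nat.dvd_of_mem_primeFactorsList hp
  have hba : (p:ℤ) ∣ b - a := dvd_sub_comm.mp (h p pp pdvd)
  have : a % (p:ℤ) = b % (p:ℤ) := Int.modEq_iff_dvd.mpr hba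
  rw [@legendreSym.mod p ⟨pp⟩ a, @legendreSym.mod p ⟨pp⟩ b, this]

lemma split_sum (g m' : ℕ) (F : ℕ → ℤ) :
    ∑ v ∈ range (g * m'), F v = ∑ w ∈ range g, ∑ u ∈ range m', F (w + g * u) := by
  rcases Nat.eq_zero_or_pos g with rfl | hg
  · simp
  rw [← Finset.sum_product']
  apply Finset.sum_nbij' (fun v => (v % g, v / g)) (fun p => p.1 + g * p.2)
  · intro v hv
    simp only [Finset.mem_range] at hv
    simp only [Finset.mem_product, Finset.mem_range]
    exact ⟨Nat.mod_lt v hg, Nat.div_lt_of_lt_mul (by omega)⟩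
  · rintro ⟨w, u⟩ hp
    simp only [Finset.mem_product, Finset.mem_range] at hp
    simp only [Finset.mem_range]
    calc w + g * u < g + g * u := by omega
    _ = g * (u+1) := by ring
    _ ≤ g * m' := Nat.mul_le_mul_left g hp.2
  · intro v hv
    simp [Nat.mod_add_div]
  · rintro ⟨w, u⟩ hp
    simp only [Finset.mem_product, Finset.mem_range] at hp
    simp [Nat.add_mul_mod_self_left, Nat.mod_eq_of_lt hp.1, Nat.add_mul_div_left _ _ hg,
      Nat.div_eq_of_lt hp.1]
  · intro v hv
    simp [Nat.mod_add_div]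

lemma sum_affine (n : ℕ) (hn : 0 < n) (c e : ℤ) (hc : Int.gcd c n = 1) (H : ℤ → ℤ)
    (hH : ∀ x y : ℤ, x % n = y % n → H x = H y) :
    (∑ u ∈ range n, H (e + c * u)) = ∑ b ∈ range n, H b := by
  have hcop : IsCoprime c (n : ℤ) := Int.isCoprime_iff_gcd_eq_one.mpr hc
  obtain ⟨c', k, hck⟩ := hcop
  have hnz : (n : ℤ) ≠ 0 := by exact_mod_cast hn.ne'
  have hmem : ∀ x : ℤ, (x % n).toNat ∈ range n := by
    intro x
    have h1 : 0 ≤ x % n := Int.emod_nonneg x hnz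
    have h2 : x % n < n := Int.emod_lt_of_pos x (by exact_mod_cast hn)
    simp only [Finset.mem_range]
    omega
  have key : ∀ x : ℤ, (((x % n).toNat : ℤ)) = x % n := by
    intro x
    have h1 : 0 ≤ x % n := Int.emod_nonneg x hnz
    omega
  have emod_self : ∀ x : ℤ, x % (n:ℤ) ≡ x [ZMOD (n:ℤ)] := fun x => Int.emod_emod_of_dvd x dvd_rfl
  refine Finset.sum_nbij' (i := fun u : ℕ => ((e + c * (u:ℤ)) % n).toNat)
      (j := fun b : ℕ => ((c' * ((b : ℤ) - e)) % n).toNat) ?_ ?_ ?_ ?_ ?_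
  · intro u _; exact hmem _
  · intro b _; exact hmem _
  · -- left inverse
    intro u hu
    simp only [Finset.mem_range] at hu
    show ((c' * ((((e + c * u) % n).toNat : ℤ) - e)) % n).toNat = u
    rw [key]
    have step : c' * ((e + c * u) % n - e) ≡ c' * ((e + c * u) - e) [ZMOD (n:ℤ)] :=
      ((emod_self (e + c * u)).sub_right e).mul_left c'
    have e1 : c' * ((e + c * (u:ℤ)) - e) ≡ (u:ℤ) [ZMOD (n:ℤ)] := by
      have : c' * ((e + c * (u:ℤ)) - e) = u + ((c' * c + k * n - 1) * u - (k * u) * n) := by ring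
      rw [this, hck]
      have : (1:ℤ) * ↑u - 1 * ↑u + k * ↑u * ↑n - k * ↑u * ↑n = 0 := by ring
      exact (Int.modEq_iff_dvd.mpr ⟨-(k * ↑u), by ring⟩).symm
    have h1 : (c' * ((e + c * u) % n - e)) % n = (u : ℤ) % n := step.trans e1
    have h2 : (u : ℤ) % n = u := Int.emod_eq_of_lt (by positivity) (by exact_mod_cast hu)
    omega
  · -- right inverse
    intro b hb
    simp only [Finset.mem_range] at hb
    show ((e + c * (((c' * ((b:ℤ) - e)) % n).toNat : ℤ)) % n).toNat = b
    rw [key]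
    have step : e + c * ((c' * ((b:ℤ) - e)) % n) ≡ e + c * (c' * ((b:ℤ) - e)) [ZMOD (n:ℤ)] :=
      ((emod_self (c' * ((b:ℤ) - e))).mul_left c).add_left e
    have e1 : e + c * (c' * ((b:ℤ) - e)) ≡ (b:ℤ) [ZMOD (n:ℤ)] := by
      have : e + c * (c' * ((b:ℤ) - e)) = b + ((c' * c + k * n - 1) * ((b:ℤ) - e) - (k * ((b:ℤ) - e)) * n) := by ring
      rw [this, hck]
      exact (Int.modEq_iff_dvd.mpr ⟨-(k * ((b:ℤ) - e)), by ring⟩).symm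
    have h1 : (e + c * ((c' * ((b:ℤ) - e)) % n)) % n = (b : ℤ) % n := step.trans e1
    have h2 : (b : ℤ) % n = b := Int.emod_eq_of_lt (by positivity) (by exact_mod_cast hb)
    omega
  · intro u hu
    exact hH _ _ (by rw [key]; exact (emod_self _).symm)

lemma jac_sum_square (g : ℕ) (hg : 0 < g) (hsq : IsSquare g) :
    ∑ x ∈ range g, J((x:ℤ) | g) = (g.totient : ℤ) := by
  obtain ⟨k, rfl⟩ := hsq
  have hk : 0 < k := by by_contra h; push_neg at h; interval_cases k <;> omega
  haveI : NeZero k := ⟨hk.ne'⟩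
  have : ∀ x : ℕ, J((x:ℤ) | k * k) = if (k*k).Coprime x then 1 else 0 := by
    intro x
    rw [jacobiSym.mul_right]
    by_cases hco : (k*k).Coprime x
    · rw [if_pos hco, ← sq, jacobiSym.sq_one]
      have : Nat.Coprime x k := Nat.Coprime.coprime_dvd_right ⟨k, rfl⟩ hco.symm
      simpa [Int.gcd_natCast_natCast] using this
    · rw [if_neg hco, ← sq]
      have : ¬ Nat.Coprime x k := by
        intro hxk
        exact hco (Nat.Coprime.mul hxk.symm hxk.symm)
      have hz : J((x:ℤ) | k) = 0 := by
        rw [jacobiSym.eq_zero_iff_not_coprime]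
        simpa [Int.gcd_natCast_natCast] using this
      rw [hz]; ring
  simp_rw [this]
  rw [Finset.sum_boole, Nat.totient]

lemma square_of_even_factorization (g : ℕ) (hg : 0 < g)
    (h : ∀ p, Even (g.factorization p)) : IsSquare g := by
  refine ⟨g.factorization.prod fun p e => p ^ (e / 2), ?_⟩
  conv_lhs => rw [← Nat.factorization_prod_pow_eq_self hg.ne']
  rw [Finsupp.prod, Finsupp.prod, ← Finset.prod_mul_distrib]
  apply Finset.prod_congr rfl
  intro p hp
  rw [← pow_add]
  congr 1
  rcases h p with ⟨c, hc⟩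
  omega

lemma exists_jac_neg_one (g : ℕ) (hg : 0 < g) (hodd : Odd g) (hns : ¬ IsSquare g) :
    ∃ c : ℕ, Nat.Coprime c g ∧ J((c:ℤ) | g) = -1 := by
  have hodd_exp : ∃ p, Odd (g.factorization p) := by
    by_contra hall
    push_neg at hall
    exact hns (square_of_even_factorization g hg fun p => Nat.not_odd_iff_even.mp (hall p))
  obtain ⟨p, hpe⟩ := hodd_exp
  have hpe0 : g.factorization p ≠ 0 := by rcases hpe with ⟨c, hc⟩; omega
  have hpp : p.Prime := by
    by_contra hnp
    exact hpe0 (Nat.factorization_eq_zero_of_not_prime g hnp)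
  haveI : Fact p.Prime := ⟨hpp⟩
  have hpdvd : p ∣ g := Nat.dvd_of_factorization_pos hpe0
  have h2g : ¬ 2 ∣ g := by rcases hodd with ⟨c, hc⟩; omega
  have hp2 : p ≠ 2 := by rintro rfl; exact h2g hpdvd
  have hpodd : Odd p := hpp.odd_of_ne_two hp2
  -- decompose g = p^e * h
  set e := g.factorization p with he
  set h := g / p ^ e with hh
  have hge : g = p ^ e * h := (Nat.ordProj_mul_ordCompl_eq_self g p).symm
  have hph : ¬ p ∣ h := Nat.not_dvd_ordCompl hpp hg.ne'
  have hh0 : h ≠ 0 := by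
    intro h0; rw [h0, mul_zero] at hge; omega
  -- nonsquare mod p
  have hchar : ringChar (ZMod p) ≠ 2 := by
    rw [ZMod.ringChar_zmod_n]; exact hp2
  obtain ⟨ns, hns'⟩ := FiniteField.exists_nonsquare hchar
  have hns0 : ns ≠ 0 := fun h0 => hns' (h0 ▸ ⟨0, (mul_zero 0).symm⟩)
  -- CRT
  have hcop_ph : Nat.Coprime (p ^ e) h := Nat.Coprime.pow_left e ((Nat.Prime.coprime_iff_not_dvd hpp).mpr hph)
  obtain ⟨c, hc1, hc2⟩ := Nat.chineseRemainder hcop_ph ns.val 1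
  -- c mod p = ns
  have hcp : (c : ZMod p) = ns := by
    have : c ≡ ns.val [MOD p] := (Nat.ModEq.of_dvd (dvd_pow_self p hpe0) hc1)
    calc (c : ZMod p) = (ns.val : ZMod p) := (ZMod.natCast_eq_natCast_iff _ _ _).mpr this
    _ = ns := ZMod.natCast_rightInverse ns
  have hcpcop : Nat.Coprime c p := by
    rw [Nat.coprime_comm, hpp.coprime_iff_not_dvd]
    intro hdvd
    have : (c : ZMod p) = 0 := (ZMod.natCast_eq_zero_iff c p).mpr hdvd
    rw [hcp] at this
    exact hns0 this
  have hcchop : Nat.Coprime c h := by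
    have : c % h = 1 % h := hc2
    have : Nat.gcd h c = Nat.gcd h 1 := by
      rw [Nat.gcd_rec h c, Nat.gcd_rec h 1, this]
    simpa [Nat.Coprime, Nat.gcd_comm] using this
  have hccop : Nat.Coprime c g := by
    rw [hge]
    exact Nat.Coprime.mul_right (hcpcop.pow_right e) hcchop
  refine ⟨c, hccop, ?_⟩
  have hjp : J((c:ℤ) | p) = -1 := by
    rw [ZMod.nonsquare_iff_jacobiSym_eq_neg_one]  -- maybe namespace
    rwa [show (((c:ℤ) : ZMod p)) = (c : ZMod p) by push_cast; ring, hcp]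
  have hjh : J((c:ℤ) | h) = 1 := by
    have : (c : ℤ) % h = 1 % h := by
      have := hc2
      unfold Nat.ModEq at this
      exact_mod_cast congrArg (fun x : ℕ => (x : ℤ)) this
    rw [jacobiSym.mod_left' this, jacobiSym.one_left]
  rw [hge, jacobiSym.mul_right' _ (pow_ne_zero e hpp.ne_zero) hh0, jacobiSym.pow_right, hjp, hjh,
    hpe.neg_one_pow, mul_one]

lemma jac_sum (g : ℕ) (hg : 0 < g) (hodd : Odd g) :
    ∑ x ∈ range g, J((x:ℤ) | g) = if IsSquare g then (g.totient : ℤ) else 0 := by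
  by_cases hsq : IsSquare g
  · rw [if_pos hsq]; exact jac_sum_square g hg hsq
  rw [if_neg hsq]
  obtain ⟨c, hcop, hc⟩ := exists_jac_neg_one g hg hodd hsq
  have hgcd : Int.gcd (c : ℤ) g = 1 := by
    simpa [Int.gcd_natCast_natCast] using hcop
  have key := sum_affine g hg (c : ℤ) 0 hgcd (fun z => J(z | g))
    (fun x y h => jacobiSym.mod_left' h)
  simp only [zero_add] at key
  have expand : ∀ u : ℕ, J((c:ℤ) * u | g) = J((c:ℤ) | g) * J((u:ℤ) | g) := fun u =>
    jacobiSym.mul_left _ _ _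
  rw [Finset.sum_congr rfl (fun u _ => expand u)] at key
  rw [← Finset.mul_sum, hc] at key
  linarith

theorem stmt9 (d r P : ℕ) (t : ℤ) (m g m' : ℕ)
    (hd : 0 < d) (hdodd : Odd d) (hr : 0 < r) (hrd : Nat.gcd r d = 1)
    (hP : P.Prime) (hPodd : Odd P) (ht : Int.gcd t d = 1)
    (hdvd : (d : ℤ) ^ 2 ∣ (r : ℤ) ^ 2 * t - 4 * (P : ℤ))
    (hm : 0 < m) (hmodd : Odd m) (hPm : ¬ P ∣ m)
    (hgm : g ∣ m) (hgd : ∀ p : ℕ, p.Prime → p ∣ g → p ∣ d)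
    (hgmax : Nat.gcd (m / g) d = 1) (hm' : m' = m / g) :
    (∑ v ∈ Finset.range m,
        jacobiSym (t + (v : ℤ) * (d : ℤ) ^ 2) m *
          jacobiSym (((r : ℤ) ^ 2 * (t + (v : ℤ) * (d : ℤ) ^ 2) - 4 * (P : ℤ)) / (d : ℤ) ^ 2) m) =
      (Nat.totient g : ℤ) * (if IsSquare g then 1 else 0) *
        (∑ b ∈ Finset.range m',
          jacobiSym (b : ℤ) m' * jacobiSym ((b : ℤ) * (r : ℤ) ^ 2 - 4 * (P : ℤ)) m') := by
  -- basic positivity / parity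
  have hg0 : 0 < g := Nat.pos_of_dvd_of_pos hgm hm
  have hmm : g * m' = m := by rw [hm']; exact Nat.mul_div_cancel' hgm
  have hm'0 : 0 < m' := by
    rcases Nat.eq_zero_or_pos m' with h0 | h; · rw [← hmm, h0, mul_zero] at hm; omega
    exact h
  have h2m : ¬ 2 ∣ m := by rcases hmodd with ⟨c, hc⟩; omega
  have hgodd : Odd g := by
    rcases Nat.even_or_odd g with he | ho
    · exact absurd (dvd_trans he.two_dvd hgm) h2m
    · exact ho
  have hm'odd : Odd m' := by
    rcases Nat.even_or_odd m' with he | ho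
    · exact absurd (dvd_trans he.two_dvd (hmm ▸ Dvd.intro_left g rfl)) h2m
    · exact ho
  have hm'd : Nat.Coprime m' d := by rw [hm']; exact hgmax
  -- coprimality facts
  have hgm' : Nat.Coprime g m' := by
    by_contra hnc
    obtain ⟨q, hq, hqg, hqm'⟩ := Nat.Prime.not_coprime_iff_dvd.mp hnc
    have hqd : q ∣ d := hgd q hq hqg
    have : q ∣ Nat.gcd m' d := Nat.dvd_gcd hqm' hqd
    rw [hm'd] at this
    have h1 := Nat.le_of_dvd one_pos this
    have h2 := hq.two_le
    have h3 := Nat.le_of_dvd (by omega) hqm'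
    omega

    -- coprime to g from coprime to d
  have cop_g : ∀ a : ℕ, Nat.gcd a d = 1 → Nat.Coprime a g := by
    intro a ha
    by_contra hnc
    obtain ⟨q, hq, hqa, hqg⟩ := Nat.Prime.not_coprime_iff_dvd.mp hnc
    have hqd : q ∣ d := hgd q hq hqg
    have : q ∣ Nat.gcd a d := Nat.dvd_gcd hqa hqd
    rw [ha] at this
    have h1 := Nat.le_of_dvd one_pos this
    have h2 := hq.two_le
    omega
  have htd : Nat.gcd t.natAbs d = 1 := by
    simpa [Int.gcd] using ht
  have htg : Nat.Coprime t.natAbs g := cop_g _ htd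
  have hrg : Nat.Coprime r g := cop_g _ hrd
  -- s
  obtain ⟨s, hs⟩ := hdvd
  have hd0 : ((d:ℤ))^2 ≠ 0 := by positivity
  have hdm' : Int.gcd (d:ℤ) m' = 1 := by
    simpa [Int.gcd_natCast_natCast] using hm'd.symm
  -- the m'-side function
  set H : ℤ → ℤ := fun b => J(b | m') * J((r:ℤ)^2 * b - 4 * P | m') with hH_def
  have hH : ∀ x y : ℤ, x % (m':ℤ) = y % (m':ℤ) → H x = H y := by
    intro x y hxy
    have h2 : ((r:ℤ)^2 * x - 4 * P) % m' = ((r:ℤ)^2 * y - 4 * P) % m' :=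
      (Int.ModEq.mul_left ((r:ℤ)^2) hxy).sub_right (4 * P)
    simp only [hH_def]
    rw [jacobiSym.mod_left' hxy, jacobiSym.mod_left' h2]
  -- pointwise rewrite of the summand
  have point : ∀ v : ℕ,
      J(t + (v:ℤ) * (d:ℤ)^2 | m) * J(((r:ℤ)^2 * (t + (v:ℤ)*(d:ℤ)^2) - 4*(P:ℤ)) / (d:ℤ)^2 | m)
      = J(t | g) * J(s + (r:ℤ)^2 * v | g) * H (t + (v:ℤ) * (d:ℤ)^2) := by
    intro v
    have hdiv : ((r:ℤ)^2 * (t + (v:ℤ)*(d:ℤ)^2) - 4*(P:ℤ)) / (d:ℤ)^2 = s + (r:ℤ)^2 * v := by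
      have hnum : (r:ℤ)^2 * (t + (v:ℤ)*(d:ℤ)^2) - 4*(P:ℤ) = (d:ℤ)^2 * (s + (r:ℤ)^2 * v) := by
        linear_combination hs
      rw [hnum, Int.mul_ediv_cancel_left _ hd0]
    rw [hdiv]
    rw [show m = g * m' from hmm.symm,
      jacobiSym.mul_right' _ hg0.ne' hm'0.ne', jacobiSym.mul_right' _ hg0.ne' hm'0.ne']
    have hconst : J(t + (v:ℤ)*(d:ℤ)^2 | g) = J(t | g) := by
      apply jac_congr
      intro p hp hpg
      have hpd : (p:ℤ) ∣ (d:ℤ) := Int.natCast_dvd_natCast.mpr (hgd p hp hpg)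
      have : (p:ℤ) ∣ (d:ℤ)^2 := hpd.trans (dvd_pow_self _ (by norm_num))
      simpa using this.mul_left (v:ℤ)
    have hsec : J(s + (r:ℤ)^2 * v | m') = J((r:ℤ)^2 * (t + (v:ℤ)*(d:ℤ)^2) - 4*(P:ℤ) | m') := by
      have hnum : (r:ℤ)^2 * (t + (v:ℤ)*(d:ℤ)^2) - 4*(P:ℤ) = (d:ℤ)^2 * (s + (r:ℤ)^2 * v) := by
        linear_combination hs
      rw [hnum, jacobiSym.mul_left, jacobiSym.sq_one' hdm', one_mul]
    rw [hconst, hsec]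
    simp only [hH_def]
    ring
  rw [Finset.sum_congr rfl fun v _ => point v]
  -- split the sum
  rw [show m = g * m' from hmm.symm]
  rw [split_sum g m' (fun v => J(t | g) * J(s + (r:ℤ)^2 * v | g) * H (t + (v:ℤ) * (d:ℤ)^2))]
  -- coprimality for affine sums
  have hcop_gd2 : Int.gcd ((g:ℤ) * (d:ℤ)^2) m' = 1 := by
    rw [← Int.isCoprime_iff_gcd_eq_one]
    have c1 : IsCoprime (g:ℤ) (m':ℤ) := by
      rw [Int.isCoprime_iff_gcd_eq_one]
      simpa [Int.gcd_natCast_natCast] using hgm'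
    have c2 : IsCoprime (d:ℤ) (m':ℤ) := by
      rw [Int.isCoprime_iff_gcd_eq_one]; exact hdm'
    exact c1.mul_left (c2.pow_left)
  have hr2g : Int.gcd ((r:ℤ)^2) g = 1 := by
    rw [← Int.isCoprime_iff_gcd_eq_one]
    have : IsCoprime (r:ℤ) (g:ℤ) := by
      rw [Int.isCoprime_iff_gcd_eq_one]
      simpa [Int.gcd_natCast_natCast] using hrg
    exact this.pow_left
  -- evaluate inner sums
  have inner : ∀ w : ℕ, w ∈ range g →
      (∑ u ∈ range m', J(t | g) * J(s + (r:ℤ)^2 * ((w:ℕ) + g * u : ℕ) | g)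
        * H (t + (((w:ℕ) + g * u : ℕ):ℤ) * (d:ℤ)^2))
      = J(t | g) * J(s + (r:ℤ)^2 * w | g) * ∑ b ∈ range m', H b := by
    intro w _
    have step1 : ∀ u : ℕ, J(s + (r:ℤ)^2 * ((w + g * u : ℕ):ℤ) | g) = J(s + (r:ℤ)^2 * w | g) := by
      intro u
      apply jacobiSym.mod_left'
      apply Int.ModEq.symm
      apply Int.modEq_iff_dvd.mpr
      exact ⟨(r:ℤ)^2 * u, by push_cast; ring⟩
    have step2 : ∀ u : ℕ, H (t + (((w + g * u : ℕ)):ℤ) * (d:ℤ)^2)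
        = H ((t + (w:ℤ)*(d:ℤ)^2) + ((g:ℤ)*(d:ℤ)^2) * u) := by
      intro u
      congr 1
      push_cast
      ring
    calc ∑ u ∈ range m', J(t | g) * J(s + (r:ℤ)^2 * ((w + g * u : ℕ):ℤ) | g)
          * H (t + (((w + g * u : ℕ)):ℤ) * (d:ℤ)^2)
        = ∑ u ∈ range m', J(t | g) * J(s + (r:ℤ)^2 * w | g)
          * H ((t + (w:ℤ)*(d:ℤ)^2) + ((g:ℤ)*(d:ℤ)^2) * u) := by
          refine Finset.sum_congr rfl fun u _ => ?_
          rw [step1 u, step2 u]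
      _ = J(t | g) * J(s + (r:ℤ)^2 * w | g) * ∑ u ∈ range m',
            H ((t + (w:ℤ)*(d:ℤ)^2) + ((g:ℤ)*(d:ℤ)^2) * u) := by
          rw [Finset.mul_sum]
      _ = J(t | g) * J(s + (r:ℤ)^2 * w | g) * ∑ b ∈ range m', H b := by
          rw [sum_affine m' hm'0 _ _ hcop_gd2 H hH]
  rw [Finset.sum_congr rfl inner]
  -- pull out the constant factor
  rw [← Finset.sum_mul, ← Finset.mul_sum]
  -- evaluate the g-sum
  have gsum : (∑ w ∈ range g, J(s + (r:ℤ)^2 * w | g))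
      = if IsSquare g then (g.totient : ℤ) else 0 := by
    rw [sum_affine g hg0 ((r:ℤ)^2) s hr2g (fun z => J(z | g))
      (fun x y h => jacobiSym.mod_left' h)]
    exact jac_sum g hg0 hgodd
  rw [gsum]
  -- identify θ
  have theta_eq : (∑ b ∈ range m', H b)
      = ∑ b ∈ range m', J((b:ℤ) | m') * J((b:ℤ) * (r:ℤ)^2 - 4*(P:ℤ) | m') := by
    refine Finset.sum_congr rfl fun b _ => ?_
    simp only [hH_def]
    congr 2
    ring
  rw [theta_eq]
  -- final case analysis
  by_cases hsq : IsSquare g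
  · rw [if_pos hsq, if_pos hsq]
    have htg1 : J(t | g) = 1 := by
      obtain ⟨k, hk⟩ := hsq
      have hk0 : k ≠ 0 := by rintro rfl; simp at hk; omega
      have htk : Int.gcd t k = 1 := by
        have : Nat.Coprime t.natAbs k := Nat.Coprime.coprime_dvd_right ⟨k, hk⟩ htg
        simpa [Int.gcd] using this
      rw [hk, jacobiSym.mul_right' _ hk0 hk0, ← sq, jacobiSym.sq_one htk]
    rw [htg1]
    ring
  · rw [if_neg hsq, if_neg hsq]
    ring
end

section
/- There is an absolute constant C > 0 with the following property. Let m be a positive integer and π : ℤ → ℂ an m-periodic function with |π(x)| = 1 for all x ∈ ℤ. Set ℳ := max_{n mod m} |Σ_{b=0}^{m−1} e(bn/m)·π(b)|, where e(x) := e^{2πix}. Then for every real ℓ > 0 and every interval I ⊂ ℝ of length ℓ: |Σ_{x ∈ I ∩ ℤ} π(x)| ≤ C·(√(ℳℓ) + ℳℓ/m + 1). -/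
/-!
Descend `f` to `Φ : ZMod m → ℂ`; then `ℳ` bounds every coefficient of the discrete Fourier
transform `𝓕 Φ`. An interval of length `L` consists of `⌊L / m⌋` full periods, each contributing
`∑ Φ = 𝓕 Φ 0` of norm at most `ℳ`, and a piece of length less than `m`. On such a short piece,
averaging the sum `S` over the shifts by `0, …, H - 1` costs at most `2H`, and the averaged sum is
a sum of windows `∑_{h < H} Φ (x + h)`. The Fourier transform of the window function is `𝓕 Φ`
times a Dirichlet kernel, so Plancherel bounds the total squared mass of the windows by `ℳ² H`,
and Cauchy–Schwarz gives `H ‖S‖ ≤ ℳ √(L H) + 2 H²`. If `ℳ < L`, taking `H = ⌊ℳ⌋ + 1` yields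
`‖S‖ ≤ 3 √(ℳ L) + 2`; otherwise the trivial bound `‖S‖ ≤ L ≤ √(ℳ L)` suffices.
-/

/-- `ℳ = max_{n mod m} |∑_{b mod m} e(bn/m) π(b)|`, where `e(x) = e^{2πix}`. -/
noncomputable def expSumMax (m : ℕ) (f : ℤ → ℂ) : ℝ :=
  ⨆ n : Fin m, ‖∑ b ∈ Finset.range m,
      Complex.exp (2 * Real.pi * Complex.I * (((b : ℝ) * ((n : ℕ) : ℝ) / (m : ℝ) : ℝ) : ℂ)) *
        f (b : ℤ)‖

open Finset ZMod ComplexConjugate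

section Sequences

variable {E : Type*} [SeminormedAddCommGroup E] {g : ℕ → E}

lemma norm_sum_range_le_of_norm_le_one (hg : ∀ i, ‖g i‖ ≤ 1) (L : ℕ) :
    ‖∑ i ∈ range L, g i‖ ≤ L := by
  simpa using norm_sum_le_of_le (range L) fun i _ ↦ hg i

lemma norm_sum_range_add_sub_le (hg : ∀ i, ‖g i‖ ≤ 1) (h L : ℕ) :
    ‖∑ x ∈ range L, g (h + x) - ∑ x ∈ range L, g x‖ ≤ 2 * h := by
  have hswap : ∑ x ∈ range L, g (h + x) - ∑ x ∈ range L, g x =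
      ∑ x ∈ range h, g (L + x) - ∑ x ∈ range h, g x := by
    rw [sub_eq_sub_iff_add_eq_add, add_comm, ← sum_range_add, add_comm (∑ x ∈ range h, _),
      ← sum_range_add, add_comm]
  rw [hswap, two_mul]
  exact (norm_sub_le _ _).trans (add_le_add (norm_sum_range_le_of_norm_le_one (fun i ↦ hg _) h)
    (norm_sum_range_le_of_norm_le_one hg h))

lemma norm_nsmul_sum_range_sub_le (hg : ∀ i, ‖g i‖ ≤ 1) (H L : ℕ) :
    ‖H • ∑ x ∈ range L, g x - ∑ h ∈ range H, ∑ x ∈ range L, g (h + x)‖ ≤ 2 * H ^ 2 := by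
  rw [show H • ∑ x ∈ range L, g x = ∑ _h ∈ range H, ∑ x ∈ range L, g x by simp,
    ← sum_sub_distrib]
  calc ‖∑ h ∈ range H, (∑ x ∈ range L, g x - ∑ x ∈ range L, g (h + x))‖
      ≤ ∑ _h ∈ range H, 2 * (H : ℝ) := by
        refine norm_sum_le_of_le _ fun h hh ↦ ?_
        rw [norm_sub_rev]
        refine (norm_sum_range_add_sub_le hg h L).trans ?_
        gcongr
        exact (mem_range.1 hh).le
    _ = 2 * H ^ 2 := by
        rw [sum_const, card_range, nsmul_eq_mul]
        ring

end Sequences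

namespace ZMod

lemma natCast_injOn_range {N L : ℕ} (hL : L ≤ N) : Set.InjOn (Nat.cast : ℕ → ZMod N) (range L) := by
  intro x hx y hy hxy
  have hx' := (mem_range.1 hx).trans_le hL
  have hy' := (mem_range.1 hy).trans_le hL
  simpa [val_cast_of_lt hx', val_cast_of_lt hy'] using congrArg val hxy

variable {N : ℕ} [NeZero N]

lemma sum_range_natCast_add {M : Type*} [AddCommMonoid M] (φ : ZMod N → M) (a : ZMod N) :
    ∑ i ∈ range N, φ (a + i) = ∑ j, φ j := by
  rw [← Equiv.sum_comp (Equiv.addLeft a) φ]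
  exact Finset.sum_bij' (fun i _ ↦ (i : ZMod N)) (fun j _ ↦ j.val) (by simp)
    (fun j _ ↦ mem_range.2 (val_lt j)) (fun i hi ↦ val_cast_of_lt (mem_range.1 hi))
    (fun j _ ↦ natCast_zmod_val j) (fun _ _ ↦ rfl)

lemma sum_norm_sq_dft (Φ : ZMod N → ℂ) : ∑ k, ‖𝓕 Φ k‖ ^ 2 = N * ∑ j, ‖Φ j‖ ^ 2 := by
  have hinv (j : ZMod N) : ∑ k, stdAddChar (k * j) * 𝓕 Φ k = N * Φ j := by
    have h := invDFT_apply (𝓕 Φ) j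
    rw [LinearEquiv.symm_apply_apply] at h
    simp only [smul_eq_mul] at h
    rw [h, ← mul_assoc, mul_inv_cancel₀ (NeZero.ne (N : ℂ)), one_mul]
  have key : ∑ k, 𝓕 Φ k * conj (𝓕 Φ k) = N * ∑ j, Φ j * conj (Φ j) := calc
    ∑ k, 𝓕 Φ k * conj (𝓕 Φ k) = ∑ k, ∑ j, Φ j * (stdAddChar (-(j * k)) * conj (𝓕 Φ k)) := by
      refine sum_congr rfl fun k _ ↦ ?_
      rw [dft_apply, sum_mul]
      exact sum_congr rfl fun j _ ↦ by rw [smul_eq_mul]; ring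
    _ = ∑ j, Φ j * conj (∑ k, stdAddChar (k * j) * 𝓕 Φ k) := by
      rw [sum_comm]
      refine sum_congr rfl fun j _ ↦ ?_
      rw [map_sum, mul_sum]
      refine sum_congr rfl fun k _ ↦ ?_
      rw [map_mul, ← AddChar.map_neg_eq_conj, mul_comm k j]
    _ = N * ∑ j, Φ j * conj (Φ j) := by
      simp only [hinv, map_mul, map_natCast, mul_sum]
      exact sum_congr rfl fun j _ ↦ by ring
  simp only [Complex.mul_conj, Complex.normSq_eq_norm_sq] at key
  exact_mod_cast key

lemma dft_comp_add_right {E : Type*} [AddCommGroup E] [Module ℂ E] (Φ : ZMod N → E)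
    (a k : ZMod N) : 𝓕 (fun j ↦ Φ (j + a)) k = stdAddChar (a * k) • 𝓕 Φ k := by
  simp only [dft_apply, smul_sum, smul_smul, ← AddChar.map_add_eq_mul]
  rw [← Equiv.sum_comp (Equiv.subRight a)]
  refine sum_congr rfl fun j _ ↦ ?_
  simp only [Equiv.subRight_apply, sub_add_cancel]
  congr 2
  ring

lemma sum_norm_sq_sum_stdAddChar {H : ℕ} (hH : H ≤ N) :
    ∑ k : ZMod N, ‖∑ h ∈ range H, stdAddChar ((h : ZMod N) * k)‖ ^ 2 = N * H := by
  have key : ∑ k : ZMod N, (∑ h ∈ range H, stdAddChar ((h : ZMod N) * k)) *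
      conj (∑ h ∈ range H, stdAddChar ((h : ZMod N) * k)) = N * H := calc
    _ = ∑ h ∈ range H, ∑ h' ∈ range H, ∑ k : ZMod N,
          stdAddChar (k * ((h : ZMod N) - (h' : ZMod N))) := by
      simp only [sum_mul_sum, map_sum, ← AddChar.map_neg_eq_conj, ← AddChar.map_add_eq_mul]
      rw [sum_comm]
      refine sum_congr rfl fun h _ ↦ ?_
      rw [sum_comm]
      exact sum_congr rfl fun h' _ ↦ sum_congr rfl fun k _ ↦ by ring_nf
    _ = ∑ h ∈ range H, ∑ h' ∈ range H, if (h : ZMod N) = h' then (N : ℂ) else 0 := by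
      simp only [AddChar.sum_mulShift _ (isPrimitive_stdAddChar N), sub_eq_zero, card,
        Nat.cast_ite, Nat.cast_zero]
    _ = N * H := by
      have hinj := natCast_injOn_range (N := N) hH
      calc _ = ∑ h ∈ range H, ∑ h' ∈ range H, if h = h' then (N : ℂ) else 0 :=
            sum_congr rfl fun h hh ↦ sum_congr rfl fun h' hh' ↦ by simp only [hinj.eq_iff hh hh']
        _ = ∑ _h ∈ range H, (N : ℂ) := sum_congr rfl fun h hh ↦ by rw [sum_ite_eq, if_pos hh]
        _ = N * H := by rw [sum_const, card_range, nsmul_eq_mul, mul_comm]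
  simp only [Complex.mul_conj, Complex.normSq_eq_norm_sq] at key
  exact_mod_cast key

lemma sum_norm_sq_sum_range_add_le {Φ : ZMod N → ℂ} {M : ℝ} (hM : ∀ k, ‖𝓕 Φ k‖ ≤ M) {H : ℕ}
    (hH : H ≤ N) : ∑ x : ZMod N, ‖∑ h ∈ range H, Φ (x + h)‖ ^ 2 ≤ M ^ 2 * H := by
  have hdft (k : ZMod N) : 𝓕 (fun x : ZMod N ↦ ∑ h ∈ range H, Φ (x + h)) k =
      (∑ h ∈ range H, stdAddChar ((h : ZMod N) * k)) * 𝓕 Φ k := by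
    have hG : (fun x : ZMod N ↦ ∑ h ∈ range H, Φ (x + h)) =
        ∑ h ∈ range H, fun x : ZMod N ↦ Φ (x + h) := by
      ext x
      rw [Finset.sum_apply]
    rw [hG, map_sum, Finset.sum_apply, sum_mul]
    exact sum_congr rfl fun h _ ↦ dft_comp_add_right Φ h k
  have hN : (0 : ℝ) < N := Nat.cast_pos.2 (Nat.pos_of_neZero N)
  rw [← mul_le_mul_iff_right₀ hN, ← sum_norm_sq_dft]
  calc ∑ k, ‖𝓕 (fun x : ZMod N ↦ ∑ h ∈ range H, Φ (x + h)) k‖ ^ 2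
      = ∑ k, ‖∑ h ∈ range H, stdAddChar ((h : ZMod N) * k)‖ ^ 2 * ‖𝓕 Φ k‖ ^ 2 := by
        simp only [hdft, norm_mul, mul_pow]
    _ ≤ ∑ k, ‖∑ h ∈ range H, stdAddChar ((h : ZMod N) * k)‖ ^ 2 * M ^ 2 := by
        gcongr with k
        exact hM k
    _ = N * (M ^ 2 * H) := by
        rw [← sum_mul, sum_norm_sq_sum_stdAddChar hH]
        ring

lemma sum_range_add_le_sum {φ : ZMod N → ℝ} (hφ : ∀ j, 0 ≤ φ j) (a : ZMod N) {L : ℕ}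
    (hL : L ≤ N) : ∑ x ∈ range L, φ (a + x) ≤ ∑ j, φ j := calc
  ∑ x ∈ range L, φ (a + x) = ∑ y ∈ (range L).image (Nat.cast : ℕ → ZMod N), φ (a + y) :=
    (sum_image (f := fun y ↦ φ (a + y)) (natCast_injOn_range hL)).symm
  _ ≤ ∑ y, φ (a + y) := sum_le_univ_sum_of_nonneg fun _ ↦ hφ _
  _ = ∑ j, φ j := Equiv.sum_comp (Equiv.addLeft a) φ

lemma sum_range_mul_natCast_add {M : Type*} [AddCommMonoid M] (φ : ZMod N → M) (a : ZMod N)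
    (q : ℕ) : ∑ x ∈ range (N * q), φ (a + x) = q • ∑ j, φ j := by
  induction q with
  | zero => simp
  | succ q ih =>
    rw [mul_add_one, sum_range_add, ih, ← sum_range_natCast_add φ a, succ_nsmul]
    congr 2 with x
    simp

variable {Φ : ZMod N → ℂ} {M : ℝ}

lemma norm_sum_sum_range_add_le (hM : ∀ k, ‖𝓕 Φ k‖ ≤ M) (a : ZMod N) {H L : ℕ} (hH : H ≤ N)
    (hL : L ≤ N) : ‖∑ x ∈ range L, ∑ h ∈ range H, Φ (a + x + h)‖ ≤ M * √(L * H) := calc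
  _ ≤ ∑ x ∈ range L, ‖∑ h ∈ range H, Φ (a + x + h)‖ := norm_sum_le _ _
  _ ≤ √(L * ∑ x ∈ range L, ‖∑ h ∈ range H, Φ (a + x + h)‖ ^ 2) := by
    refine Real.le_sqrt_of_sq_le ?_
    simpa using sq_sum_le_card_mul_sum_sq (s := range L)
      (f := fun x ↦ ‖∑ h ∈ range H, Φ (a + x + h)‖)
  _ ≤ √(L * (M ^ 2 * H)) := by
    refine Real.sqrt_le_sqrt (mul_le_mul_of_nonneg_left ?_ (Nat.cast_nonneg L))
    exact (sum_range_add_le_sum (φ := fun y : ZMod N ↦ ‖∑ h ∈ range H, Φ (y + h)‖ ^ 2)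
      (fun _ ↦ sq_nonneg _) a hL).trans (sum_norm_sq_sum_range_add_le hM hH)
  _ = M * √(L * H) := by
    rw [show (L : ℝ) * (M ^ 2 * H) = M ^ 2 * (L * H) by ring, Real.sqrt_mul (sq_nonneg M),
      Real.sqrt_sq ((norm_nonneg _).trans (hM 0))]

lemma norm_sum_range_add_le_of_le (hΦ : ∀ j, ‖Φ j‖ ≤ 1) (hM : ∀ k, ‖𝓕 Φ k‖ ≤ M)
    (a : ZMod N) {L : ℕ} (hL : L ≤ N) :
    ‖∑ x ∈ range L, Φ (a + x)‖ ≤ 3 * √(M * L) + 2 := by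
  have hM0 : 0 ≤ M := (norm_nonneg _).trans (hM 0)
  rcases le_or_gt (L : ℝ) M with hLM | hML
  · refine (norm_sum_range_le_of_norm_le_one (fun _ ↦ hΦ _) L).trans ?_
    have : (L : ℝ) ≤ √(M * L) := Real.le_sqrt_of_sq_le (by nlinarith)
    linarith [Real.sqrt_nonneg (M * L)]
  set H := ⌊M⌋₊ + 1
  have hMH : M < H := by simpa [H] using Nat.lt_floor_add_one M
  have hHL : H ≤ L := Nat.floor_lt hM0 |>.2 hML
  have hH0 : (0 : ℝ) < H := by positivity
  have hT : ‖∑ h ∈ range H, ∑ x ∈ range L, Φ (a + ↑(h + x))‖ ≤ √(M * L) * H := calc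
    _ = ‖∑ x ∈ range L, ∑ h ∈ range H, Φ (a + x + h)‖ := by
      rw [sum_comm]
      refine congrArg _ (sum_congr rfl fun x _ ↦ sum_congr rfl fun h _ ↦ ?_)
      push_cast
      ring_nf
    _ ≤ M * √(L * H) := norm_sum_sum_range_add_le hM a (hHL.trans hL) hL
    _ = √(M * L) * √(M * H) := by
      rw [← Real.sqrt_mul (by positivity), show M * L * (M * H) = M ^ 2 * (L * H) by ring,
        Real.sqrt_mul (sq_nonneg M), Real.sqrt_sq hM0]
    _ ≤ √(M * L) * H := by
      gcongr
      exact (Real.sqrt_le_sqrt (by nlinarith : M * H ≤ H ^ 2)).trans_eq (Real.sqrt_sq hH0.le)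
  have hsmooth := norm_nsmul_sum_range_sub_le (g := fun x ↦ Φ (a + x)) (fun _ ↦ hΦ _) H L
  have hS : H * ‖∑ x ∈ range L, Φ (a + x)‖ ≤ H * (√(M * L) + 2 * H) := by
    rw [show (H : ℝ) * ‖∑ x ∈ range L, Φ (a + x)‖ = ‖H • ∑ x ∈ range L, Φ (a + x)‖ by
      rw [nsmul_eq_mul, norm_mul, Complex.norm_natCast]]
    linarith [norm_sub_norm_le (H • ∑ x ∈ range L, Φ (a + x))
      (∑ h ∈ range H, ∑ x ∈ range L, Φ (a + ↑(h + x)))]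
  have hHM : (H : ℝ) ≤ M + 1 := by simpa [H] using Nat.floor_le hM0
  have hM_le : M ≤ √(M * L) := Real.le_sqrt_of_sq_le (by nlinarith)
  linarith [le_of_mul_le_mul_left hS hH0]

lemma norm_sum_range_add_le (hΦ : ∀ j, ‖Φ j‖ ≤ 1) (hM : ∀ k, ‖𝓕 Φ k‖ ≤ M) (a : ZMod N)
    (L : ℕ) : ‖∑ x ∈ range L, Φ (a + x)‖ ≤ L * M / N + 3 * √(M * L) + 2 := by
  have hM0 : 0 ≤ M := (norm_nonneg _).trans (hM 0)
  have hN : (0 : ℝ) < N := Nat.cast_pos.2 (Nat.pos_of_neZero N)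
  set q := L / N
  set r := L % N
  have hL : L = N * q + r := (Nat.div_add_mod L N).symm
  have hsplit : ∑ x ∈ range L, Φ (a + x) = q • ∑ j, Φ j + ∑ x ∈ range r, Φ (a + x) := by
    rw [hL, sum_range_add, sum_range_mul_natCast_add]
    congr 2 with x
    simp
  have hperiod : ‖q • ∑ j, Φ j‖ ≤ L * M / N := by
    rw [le_div_iff₀ hN, nsmul_eq_mul, norm_mul, Complex.norm_natCast, ← dft_apply_zero]
    have hqL : (N : ℝ) * q ≤ L := by exact_mod_cast hL ▸ Nat.le_add_right (N * q) r
    nlinarith [hM 0, norm_nonneg (𝓕 Φ 0)]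
  have hrest := norm_sum_range_add_le_of_le hΦ hM a (Nat.mod_lt L (Nat.pos_of_neZero N)).le
  have hr : √(M * r) ≤ √(M * L) := Real.sqrt_le_sqrt (by gcongr; exact Nat.mod_le L N)
  rw [hsplit]
  linarith [norm_add_le (q • ∑ j, Φ j) (∑ x ∈ range r, Φ (a + x))]

end ZMod

lemma Function.Periodic.apply_val_intCast {α : Type*} {m : ℕ} [NeZero m] {f : ℤ → α}
    (hf : Function.Periodic f m) (x : ℤ) : f ((x : ZMod m).val) = f x := by
  rw [ZMod.val_intCast, Int.emod_def, mul_comm]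
  exact hf.sub_int_mul_eq _

lemma sum_exp_mul_eq_dft {m : ℕ} [NeZero m] (f : ℤ → ℂ) (n : ℕ) :
    ∑ b ∈ range m, Complex.exp (2 * Real.pi * Complex.I * (((b : ℝ) * (n : ℝ) / (m : ℝ) : ℝ) : ℂ)) *
      f (b : ℤ) = 𝓕 (fun j : ZMod m ↦ f j.val) (-n) := by
  rw [dft_apply, ← sum_range_natCast_add _ 0]
  refine sum_congr rfl fun b hb ↦ ?_
  rw [zero_add, val_cast_of_lt (mem_range.1 hb), smul_eq_mul, mul_neg, neg_neg]
  have h := stdAddChar_coe (N := m) ((b * n : ℕ) : ℤ)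
  push_cast at h
  rw [h]
  congr 2
  push_cast
  ring

lemma norm_dft_le_expSumMax {m : ℕ} [NeZero m] (f : ℤ → ℂ) (k : ZMod m) :
    ‖𝓕 (fun j : ZMod m ↦ f j.val) k‖ ≤ expSumMax m f := by
  have hk : k = -(((-k).val : ℕ) : ZMod m) := by simp
  rw [hk, ← sum_exp_mul_eq_dft, expSumMax]
  exact le_ciSup (f := fun n : Fin m ↦ ‖∑ b ∈ range m, Complex.exp (2 * Real.pi * Complex.I *
    (((b : ℝ) * ((n : ℕ) : ℝ) / (m : ℝ) : ℝ) : ℂ)) * f (b : ℤ)‖) (Finite.bddAbove_range _)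
    ⟨(-k).val, val_lt _⟩

lemma Function.Periodic.sum_Icc_eq {M : Type*} [AddCommMonoid M] {m : ℕ} [NeZero m] {f : ℤ → M}
    (hf : Function.Periodic f m) (a b : ℤ) :
    ∑ x ∈ Icc a b, f x = ∑ x ∈ range (b + 1 - a).toNat, f (a + x : ZMod m).val := by
  rw [Int.Icc_eq_finset_map, sum_map]
  refine sum_congr rfl fun x _ ↦ ?_
  rw [show (a : ZMod m) + x = ((a + x : ℤ) : ZMod m) by push_cast; rfl, hf.apply_val_intCast]
  rfl

lemma toNat_floor_add_one_sub_ceil_le (c : ℝ) {ℓ : ℝ} (hℓ : 0 ≤ ℓ) :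
    ((⌊c + ℓ⌋ + 1 - ⌈c⌉).toNat : ℝ) ≤ ℓ + 1 := by
  have hfloor := Int.floor_le (c + ℓ)
  have hceil := Int.le_ceil c
  rw [← Int.cast_natCast, Int.toNat_eq_max]
  push_cast
  exact max_le (by linarith) (by linarith)

lemma div_add_sqrt_add_two_le {M m ℓ L : ℝ} (hM : 0 ≤ M) (hm : 0 ≤ m) (hL0 : 0 ≤ L)
    (hL : L ≤ 2 * ℓ) : L * M / m + 3 * √(M * L) + 2 ≤ 5 * (√(M * ℓ) + M * ℓ / m + 1) := by
  have hmean : 0 ≤ M * ℓ / m := div_nonneg (mul_nonneg hM (by linarith)) hm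
  have hperiods : L * M / m ≤ 2 * (M * ℓ / m) := by
    rw [← mul_div_assoc]
    exact div_le_div_of_nonneg_right (by nlinarith) hm
  have hsqrt2 : √2 ≤ 5 / 3 := Real.sqrt_le_iff.2 ⟨by norm_num, by norm_num⟩
  have hshort : √(M * L) ≤ √2 * √(M * ℓ) := by
    rw [← Real.sqrt_mul zero_le_two]
    exact Real.sqrt_le_sqrt (by nlinarith)
  linarith [mul_le_mul_of_nonneg_right hsqrt2 (Real.sqrt_nonneg (M * ℓ))]

theorem stmt11 : ∃ C : ℝ, 0 < C ∧
    ∀ m : ℕ, 0 < m → ∀ f : ℤ → ℂ,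
      (∀ x : ℤ, f (x + (m : ℤ)) = f x) → (∀ x : ℤ, ‖f x‖ = 1) →
      ∀ ℓ : ℝ, 0 < ℓ → ∀ c : ℝ,
        ‖∑ x ∈ Finset.Icc ⌈c⌉ ⌊c + ℓ⌋, f x‖ ≤
          C * (Real.sqrt (expSumMax m f * ℓ) + expSumMax m f * ℓ / (m : ℝ) + 1) := by
  refine ⟨5, by norm_num, fun m hm f hper hnorm ℓ hℓ c ↦ ?_⟩
  have : NeZero m := ⟨hm.ne'⟩
  have hM0 : 0 ≤ expSumMax m f := (norm_nonneg _).trans (norm_dft_le_expSumMax f 0)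
  have hL := toNat_floor_add_one_sub_ceil_le c hℓ.le
  rw [Function.Periodic.sum_Icc_eq hper]
  set L := (⌊c + ℓ⌋ + 1 - ⌈c⌉).toNat
  rcases lt_or_ge ℓ 1 with hℓ1 | hℓ1
  · have hL1 : (L : ℝ) ≤ 1 := by
      have : L < 2 := by exact_mod_cast (show (L : ℝ) < 2 by linarith)
      exact_mod_cast Nat.lt_succ_iff.1 this
    refine (norm_sum_range_le_of_norm_le_one (fun _ ↦ (hnorm _).le) _).trans ?_
    have hmean : 0 ≤ expSumMax m f * ℓ / m := by positivity
    linarith [Real.sqrt_nonneg (expSumMax m f * ℓ)]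
  · exact (norm_sum_range_add_le (fun _ ↦ (hnorm _).le) (norm_dft_le_expSumMax f) _ _).trans
      (div_add_sqrt_add_two_le hM0 (Nat.cast_nonneg m) (Nat.cast_nonneg _) (by linarith))
end
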